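/- arXiv:2103.09209 — 6 statements merged into one kernel-verified Lean document; each statement's English description precedes it below -/
import Mathlib

section
/- A sequence (b_n) of complex numbers satisfies: the map f ↦ Σ_n a_n b_n z^n sends HL_1 boundedly into functions bounded on the closed unit disc (with supremum over the closed disc finite for each f in HL_1) if and only if sup_n (n+1)|b_n| < ∞. In particular, sup_{|z|≤1} |Σ_n a_n b_n z^n| ≤ ‖f‖_{HL_1} · sup_n (n+1)|b_n|. -/
open Real

lemma HL1_key (b : ℕ → ℂ) (M : ℝ) (hM : ∀ n : ℕ, ((n : ℝ) + 1) * ‖b n‖ ≤ M)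
    (a : ℕ → ℂ) (ha : Summable (fun n : ℕ => ‖a n‖ / ((n : ℝ) + 1)))
    (z : ℂ) (hz : ‖z‖ ≤ 1) :
    ‖∑' n : ℕ, a n * b n * z ^ n‖ ≤ (∑' n : ℕ, ‖a n‖ / ((n : ℝ) + 1)) * M := by
  refine tsum_of_norm_bounded (ha.hasSum.mul_right M) ?_
  intro n
  have hz0 : (0:ℝ) ≤ ‖z‖ := norm_nonneg _
  have hzn : ‖z‖ ^ n ≤ 1 := pow_le_one₀ hz0 hz
  have h1 : ‖a n * b n * z ^ n‖ = ‖a n‖ * ‖b n‖ * ‖z‖ ^ n := by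
    simp [norm_mul, norm_pow]
  have hnp : (0:ℝ) < (n : ℝ) + 1 := by positivity
  have h2 : ‖a n‖ * ‖b n‖ = ‖a n‖ / ((n : ℝ) + 1) * (((n : ℝ) + 1) * ‖b n‖) := by
    field_simp
  have h3 : ‖a n‖ / ((n : ℝ) + 1) * (((n : ℝ) + 1) * ‖b n‖) ≤
      ‖a n‖ / ((n : ℝ) + 1) * M :=
    mul_le_mul_of_nonneg_left (hM n) (by positivity)
  calc ‖a n * b n * z ^ n‖ = ‖a n‖ * ‖b n‖ * ‖z‖ ^ n := h1
    _ ≤ ‖a n‖ * ‖b n‖ * 1 := by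
        exact mul_le_mul_of_nonneg_left hzn (by positivity)
    _ = ‖a n‖ / ((n : ℝ) + 1) * (((n : ℝ) + 1) * ‖b n‖) := by rw [mul_one, h2]
    _ ≤ ‖a n‖ / ((n : ℝ) + 1) * M := h3

/-- A coefficient multiplier `(b n)` maps `HL₁` boundedly into functions bounded on the
closed unit disc iff `sup_n (n+1)|b n| < ∞`; moreover the natural bound
`sup_{|z|≤1} |Σ a n b n zⁿ| ≤ ‖f‖_{HL₁} · sup_n (n+1)|b n|` holds. -/
theorem HL1_multiplier_characterization (b : ℕ → ℂ) :
    ((∃ C : ℝ, ∀ a : ℕ → ℂ, Summable (fun n : ℕ => ‖a n‖ / ((n : ℝ) + 1)) →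
        ∀ z : ℂ, ‖z‖ ≤ 1 →
          ‖∑' n : ℕ, a n * b n * z ^ n‖ ≤ C * ∑' n : ℕ, ‖a n‖ / ((n : ℝ) + 1)) ↔
      (∃ M : ℝ, ∀ n : ℕ, ((n : ℝ) + 1) * ‖b n‖ ≤ M)) ∧
    (BddAbove (Set.range fun n : ℕ => ((n : ℝ) + 1) * ‖b n‖) →
      ∀ a : ℕ → ℂ, Summable (fun n : ℕ => ‖a n‖ / ((n : ℝ) + 1)) →
        ∀ z : ℂ, ‖z‖ ≤ 1 →
          ‖∑' n : ℕ, a n * b n * z ^ n‖ ≤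
            (∑' n : ℕ, ‖a n‖ / ((n : ℝ) + 1)) * ⨆ n : ℕ, ((n : ℝ) + 1) * ‖b n‖) := by
  constructor
  · constructor
    · rintro ⟨C, hC⟩
      refine ⟨C, fun n => ?_⟩
      set a : ℕ → ℂ := fun k => if k = n then ((n : ℂ) + 1) else 0 with ha_def
      have hnorm : (fun k : ℕ => ‖a k‖ / ((k : ℝ) + 1)) =
          fun k => if k = n then (1 : ℝ) else 0 := by
        funext k
        by_cases hk : k = n
        · subst hk
          simp [ha_def]
          rw [div_eq_one_iff_eq (by positivity)]
          have hc : ((k : ℂ) + 1) = (((k : ℝ) + 1 : ℝ) : ℂ) := by push_cast; ring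
          rw [hc, Complex.norm_real, Real.norm_eq_abs]
          exact abs_of_pos (by positivity)
        · simp [ha_def, hk]
      have hsum : Summable (fun k : ℕ => ‖a k‖ / ((k : ℝ) + 1)) := by
        rw [hnorm]; exact summable_of_ne_finset_zero (s := {n}) (by intro k hk; simp at hk; simp [hk])
      have htsum : (∑' k : ℕ, ‖a k‖ / ((k : ℝ) + 1)) = 1 := by
        rw [hnorm]; exact tsum_ite_eq n 1
      have h := hC a hsum 1 (by norm_num)
      rw [htsum, mul_one] at h
      have hts : (∑' k : ℕ, a k * b k * (1:ℂ) ^ k) = ((n : ℂ) + 1) * b n := by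
        have : (fun k : ℕ => a k * b k * (1:ℂ) ^ k) =
            fun k => if k = n then ((n : ℂ) + 1) * b n else 0 := by
          funext k; by_cases hk : k = n <;> simp [ha_def, hk]
        rw [this]; exact tsum_ite_eq n _
      rw [hts] at h
      calc ((n : ℝ) + 1) * ‖b n‖ = ‖((n : ℂ) + 1) * b n‖ := by
            rw [norm_mul]
            congr 1
            have hc : ((n : ℂ) + 1) = (((n : ℝ) + 1 : ℝ) : ℂ) := by push_cast; ring
            rw [hc, Complex.norm_real, Real.norm_eq_abs]
            exact (abs_of_pos (by positivity)).symm
        _ ≤ C := h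
    · rintro ⟨M, hM⟩
      refine ⟨M, fun a ha z hz => ?_⟩
      rw [mul_comm]
      exact HL1_key b M hM a ha z hz
  · intro hbdd a ha z hz
    refine HL1_key b _ (fun n => ?_) a ha z hz
    exact le_ciSup hbdd n
end

section
/- Let g(z) = Σ_{n≥0} c_n z^n be analytic on the unit disc with c_n ≥ 0 for all n. Then Σ_{n≥0} c_{n+1} log(n+2) < ∞ if and only if ∫_0^1 M_∞(t, g') log(e/(1-t)) dt < ∞, where M_∞(t,g') = max_{|z|=t} |g'(z)|; moreover the two quantities are comparable up to absolute constants. -/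
open Real MeasureTheory ENNReal

section Aux
open Set


namespace LogCoefAux

noncomputable def J (n : ℕ) : ℝ≥0∞ :=
  ∫⁻ t in Set.Ioo (0:ℝ) 1,
    ENNReal.ofReal (((n:ℝ) + 1) * t ^ n * Real.log (Real.exp 1 / (1 - t)))

lemma log_form {t : ℝ} (ht : t < 1) :
    Real.log (Real.exp 1 / (1 - t)) = 1 - Real.log (1 - t) := by
  rw [Real.log_div (Real.exp_ne_zero 1) (by linarith), Real.log_exp]

lemma log_le_two_sqrt {x : ℝ} (hx : 0 < x) : Real.log x ≤ 2 * Real.sqrt x := by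
  have h1 : Real.log (Real.sqrt x) ≤ Real.sqrt x - 1 :=
    Real.log_le_sub_one_of_pos (Real.sqrt_pos.mpr hx)
  have h2 : Real.log (Real.sqrt x) = Real.log x / 2 := Real.log_sqrt hx.le
  nlinarith [Real.sqrt_nonneg x]

lemma meas (n : ℕ) : Measurable fun t : ℝ =>
    ENNReal.ofReal (((n:ℝ) + 1) * t ^ n * Real.log (Real.exp 1 / (1 - t))) := by
  apply Measurable.ennreal_ofReal
  exact (measurable_const.mul (measurable_id.pow_const n)).mul
    ((measurable_const.div (measurable_const.sub measurable_id)).log)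

lemma lint_pow (n : ℕ) :
    ∫⁻ t in Set.Ioo (0:ℝ) 1, ENNReal.ofReal (((n:ℝ) + 1) * t ^ n) = 1 := by
  have hint : IntegrableOn (fun t : ℝ => ((n:ℝ) + 1) * t ^ n) (Set.Ioo 0 1) :=
    ((continuous_const.mul (continuous_pow n)).integrableOn_Icc (a := (0:ℝ)) (b := 1)).mono_set
      Set.Ioo_subset_Icc_self
  rw [← ofReal_integral_eq_lintegral_ofReal hint ?nn]
  case nn =>
    filter_upwards [ae_restrict_mem measurableSet_Ioo] with t ht
    exact mul_nonneg (by positivity) (pow_nonneg ht.1.le n)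
  have : ∫ t in Set.Ioo (0:ℝ) 1, ((n:ℝ) + 1) * t ^ n = 1 := by
    rw [← integral_Ioc_eq_integral_Ioo, ← intervalIntegral.integral_of_le zero_le_one,
      intervalIntegral.integral_const_mul, integral_pow]
    have : ((n:ℝ) + 1) ≠ 0 := by positivity
    field_simp
    simp
  rw [this, ENNReal.ofReal_one]

lemma lint_rpow_tail {δ : ℝ} (hδ0 : 0 < δ) (hδ1 : δ < 1) :
    ∫⁻ t in Set.Ioo (1 - δ) (1:ℝ), ENNReal.ofReal ((1 - t) ^ (-(1/2) : ℝ))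
      = ENNReal.ofReal (2 * Real.sqrt δ) := by
  have hii : IntervalIntegrable (fun x : ℝ => (1 - x) ^ (-(1/2) : ℝ)) volume (1 - δ) 1 := by
    have := (intervalIntegral.intervalIntegrable_rpow' (a := 0) (b := δ)
      (r := (-(1/2) : ℝ)) (by norm_num)).comp_sub_left 1
    simpa using this.symm
  have hint : IntegrableOn (fun t : ℝ => (1 - t) ^ (-(1/2) : ℝ)) (Set.Ioo (1 - δ) 1) :=
    ((intervalIntegrable_iff_integrableOn_Ioc_of_le (by linarith)).mp hii).mono_set
      Set.Ioo_subset_Ioc_self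
  rw [← ofReal_integral_eq_lintegral_ofReal hint ?nn]
  case nn =>
    filter_upwards [ae_restrict_mem measurableSet_Ioo] with t ht
    exact Real.rpow_nonneg (by linarith [ht.2]) _
  congr 1
  rw [← integral_Ioc_eq_integral_Ioo, ← intervalIntegral.integral_of_le (by linarith)]
  have h1 : (∫ x in (1 - δ)..1, (1 - x) ^ (-(1/2) : ℝ))
      = ∫ x in (0:ℝ)..δ, x ^ (-(1/2) : ℝ) := by
    have := intervalIntegral.integral_comp_sub_left (a := 1 - δ) (b := 1)
      (fun x : ℝ => x ^ (-(1/2) : ℝ)) 1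
    simpa using this
  rw [h1, integral_rpow (Or.inl (by norm_num))]
  rw [Real.zero_rpow (by norm_num), Real.sqrt_eq_rpow]
  norm_num
  ring

lemma pow_ge (n : ℕ) : Real.exp (-1) ≤ (1 - 1/((n:ℝ) + 2)) ^ n := by
  have hm : (0:ℝ) < (n:ℝ) + 2 := by positivity
  have hn1 : (0:ℝ) < (n:ℝ) + 1 := by positivity
  have hb : (0:ℝ) < 1 - 1/((n:ℝ) + 2) := by
    rw [sub_pos, div_lt_one hm]; linarith [Nat.cast_nonneg (α := ℝ) n]
  have hlog1 : Real.log (((n:ℝ) + 2)/((n:ℝ) + 1)) ≤ 1/((n:ℝ) + 1) := by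
    have := Real.log_le_sub_one_of_pos (x := ((n:ℝ) + 2)/((n:ℝ) + 1)) (by positivity)
    have h2 : ((n:ℝ) + 2)/((n:ℝ) + 1) - 1 = 1/((n:ℝ) + 1) := by
      field_simp
      ring
    linarith
  have hbeq : 1 - 1/((n:ℝ) + 2) = (((n:ℝ) + 2)/((n:ℝ) + 1))⁻¹ := by
    rw [inv_div]
    field_simp
    ring
  have hlog : -1 ≤ (n:ℝ) * Real.log (1 - 1/((n:ℝ) + 2)) := by
    rw [hbeq, Real.log_inv]
    have hn : (n:ℝ) * Real.log (((n:ℝ) + 2)/((n:ℝ) + 1)) ≤ 1 := by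
      have h3 : Real.log (((n:ℝ) + 2)/((n:ℝ) + 1)) ≥ 0 := by
        apply Real.log_nonneg; rw [le_div_iff₀ hn1]; linarith
      calc (n:ℝ) * Real.log (((n:ℝ) + 2)/((n:ℝ) + 1)) ≤ ((n:ℝ) + 1) * (1/((n:ℝ) + 1)) := by
            apply mul_le_mul (by linarith) hlog1 h3 (by positivity)
        _ = 1 := by field_simp
    linarith
  calc Real.exp (-1) ≤ Real.exp ((n:ℝ) * Real.log (1 - 1/((n:ℝ) + 2))) :=
        Real.exp_le_exp.mpr hlog
    _ = (1 - 1/((n:ℝ) + 2)) ^ n := by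
        rw [Real.exp_nat_mul, Real.exp_log hb]

end LogCoefAux

namespace LogCoefAux

lemma lower (n : ℕ) :
    ENNReal.ofReal (Real.log ((n:ℝ) + 2)) ≤ 11 * J n := by
  have hm : (0:ℝ) < (n:ℝ) + 2 := by positivity
  set δ : ℝ := 1/((n:ℝ) + 2) with hδdef
  have hδ0 : 0 < δ := by positivity
  have hδ1 : δ < 1 := by rw [hδdef, div_lt_one hm]; linarith [Nat.cast_nonneg (α := ℝ) n]
  set L : ℝ := Real.log ((n:ℝ) + 2) with hLdef
  have hL0 : 0 ≤ L := Real.log_nonneg (by linarith)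
  set b : ℝ := ((n:ℝ) + 1) * Real.exp (-1) * (1 + L) with hbdef
  have hb0 : 0 ≤ b := by positivity
  have hlδ : Real.log δ = -L := by rw [hδdef, one_div, Real.log_inv]
  have htail : ∀ t ∈ Set.Ioo (1 - δ) (1:ℝ),
      ENNReal.ofReal b
        ≤ ENNReal.ofReal (((n:ℝ) + 1) * t ^ n * Real.log (Real.exp 1 / (1 - t))) := by
    intro t ht
    apply ENNReal.ofReal_le_ofReal
    have ht1 : t < 1 := ht.2
    have ht0 : 0 < t := by linarith [ht.1]
    have hpow : Real.exp (-1) ≤ t ^ n := by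
      calc Real.exp (-1) ≤ (1 - δ) ^ n := pow_ge n
        _ ≤ t ^ n := pow_le_pow_left₀ (by linarith) ht.1.le n
    have hlog : 1 + L ≤ Real.log (Real.exp 1 / (1 - t)) := by
      rw [log_form ht1]
      have h1t : 0 < 1 - t := by linarith
      have hle : Real.log (1 - t) ≤ Real.log δ := Real.log_le_log h1t (by linarith [ht.1])
      linarith
    calc b = ((n:ℝ) + 1) * Real.exp (-1) * (1 + L) := hbdef
      _ ≤ ((n:ℝ) + 1) * t ^ n * Real.log (Real.exp 1 / (1 - t)) := by
          have h1 : ((n:ℝ) + 1) * Real.exp (-1) ≤ ((n:ℝ) + 1) * t ^ n :=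
            mul_le_mul_of_nonneg_left hpow (by positivity)
          have h2 : (0:ℝ) ≤ ((n:ℝ) + 1) * Real.exp (-1) := by positivity
          exact mul_le_mul h1 hlog (by linarith) (by positivity)
  have hsub : Set.Ioo (1 - δ) (1:ℝ) ⊆ Set.Ioo 0 1 := Set.Ioo_subset_Ioo (by linarith) le_rfl
  have h1 : ENNReal.ofReal b * ENNReal.ofReal δ ≤ J n := by
    calc ENNReal.ofReal b * ENNReal.ofReal δ
        = ∫⁻ _ in Set.Ioo (1 - δ) (1:ℝ), ENNReal.ofReal b := by
          rw [setLIntegral_const, Real.volume_Ioo]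
          congr 1
          ring
      _ ≤ ∫⁻ t in Set.Ioo (1 - δ) (1:ℝ),
            ENNReal.ofReal (((n:ℝ) + 1) * t ^ n * Real.log (Real.exp 1 / (1 - t))) :=
          setLIntegral_mono (meas n) htail
      _ ≤ J n := lintegral_mono_set hsub
  calc ENNReal.ofReal L ≤ 11 * (ENNReal.ofReal b * ENNReal.ofReal δ) := by
        rw [← ENNReal.ofReal_mul hb0,
          show (11:ℝ≥0∞) = ENNReal.ofReal (11:ℝ) by simp,
          ← ENNReal.ofReal_mul (by norm_num)]
        apply ENNReal.ofReal_le_ofReal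
        have he : (1:ℝ)/3 ≤ Real.exp (-1) := by
          have h3 : Real.exp 1 ≤ 3 := le_of_lt (lt_trans Real.exp_one_lt_d9 (by norm_num))
          rw [Real.exp_neg]
          calc (1:ℝ)/3 ≤ 1/Real.exp 1 := one_div_le_one_div_of_le (Real.exp_pos 1) h3
            _ = (Real.exp 1)⁻¹ := one_div _
        have hnd : (1:ℝ)/2 ≤ ((n:ℝ) + 1) * δ := by
          rw [hδdef, mul_one_div, le_div_iff₀ hm]
          push_cast
          linarith [Nat.cast_nonneg (α := ℝ) n]
        have h16 : (1:ℝ)/6 * (1 + L) ≤ (Real.exp (-1) * (((n:ℝ) + 1) * δ)) * (1 + L) := by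
          apply mul_le_mul_of_nonneg_right ?_ (by linarith)
          calc (1:ℝ)/6 = 1/3 * (1/2) := by norm_num
            _ ≤ Real.exp (-1) * (((n:ℝ) + 1) * δ) :=
              mul_le_mul he hnd (by norm_num) (Real.exp_pos _).le
        have heq : 11 * (b * δ) = 11 * ((Real.exp (-1) * (((n:ℝ) + 1) * δ)) * (1 + L)) := by
          rw [hbdef]; ring
        rw [heq]
        nlinarith [h16]
    _ ≤ 11 * J n := mul_le_mul_right h1 _

end LogCoefAux

namespace LogCoefAux

lemma upper (n : ℕ) : J n ≤ 11 * ENNReal.ofReal (Real.log ((n:ℝ) + 2)) := by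
  have hm : (0:ℝ) < (n:ℝ) + 2 := by positivity
  set δ : ℝ := 1/((n:ℝ) + 2) with hδdef
  have hδ0 : 0 < δ := by positivity
  have hδ1 : δ < 1 := by rw [hδdef, div_lt_one hm]; linarith [Nat.cast_nonneg (α := ℝ) n]
  set L : ℝ := Real.log ((n:ℝ) + 2) with hLdef
  have hL23 : 2/3 ≤ L := by
    have h1 : Real.log 2 ≤ L := Real.log_le_log (by norm_num) (by linarith [Nat.cast_nonneg (α := ℝ) n])
    have h2 : (0.6931471803 : ℝ) < Real.log 2 := Real.log_two_gt_d9
    linarith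
  have hL0 : 0 ≤ L := by linarith
  have hlδ : Real.log δ = -L := by rw [hδdef, one_div, Real.log_inv]
  have hnd1 : ((n:ℝ) + 1) * δ ≤ 1 := by
    rw [hδdef, mul_one_div, div_le_one hm]; linarith
  have hsplit : Set.Ioo (0:ℝ) 1 = Set.Ioc 0 (1 - δ) ∪ Set.Ioo (1 - δ) 1 :=
    (Set.Ioc_union_Ioo_eq_Ioo (by linarith) (by linarith)).symm
  have hdisj : Disjoint (Set.Ioc (0:ℝ) (1 - δ)) (Set.Ioo (1 - δ) 1) := by
    rw [Set.disjoint_left]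
    rintro x ⟨_, h1⟩ ⟨h2, _⟩
    exact absurd h1 (not_le.mpr h2)
  have hmeas2 : Measurable fun t : ℝ => ENNReal.ofReal (((n:ℝ) + 1) * t ^ n) :=
    (measurable_const.mul (measurable_id.pow_const n)).ennreal_ofReal
  -- head bound
  have hhead : (∫⁻ t in Set.Ioc (0:ℝ) (1 - δ),
      ENNReal.ofReal (((n:ℝ) + 1) * t ^ n * Real.log (Real.exp 1 / (1 - t))))
      ≤ ENNReal.ofReal (1 + L) := by
    have hb : ∀ t ∈ Set.Ioc (0:ℝ) (1 - δ),
        ENNReal.ofReal (((n:ℝ) + 1) * t ^ n * Real.log (Real.exp 1 / (1 - t)))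
          ≤ ENNReal.ofReal ((1 + L) * (((n:ℝ) + 1) * t ^ n)) := by
      intro t ht
      apply ENNReal.ofReal_le_ofReal
      have ht1 : t ≤ 1 - δ := ht.2
      have h1t : δ ≤ 1 - t := by linarith
      have hlog2 : Real.log (Real.exp 1 / (1 - t)) ≤ 1 + L := by
        rw [log_form (by linarith : t < 1)]
        have : Real.log δ ≤ Real.log (1 - t) := Real.log_le_log hδ0 h1t
        linarith
      calc ((n:ℝ) + 1) * t ^ n * Real.log (Real.exp 1 / (1 - t))
          ≤ ((n:ℝ) + 1) * t ^ n * (1 + L) := by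
            apply mul_le_mul_of_nonneg_left hlog2
            have := ht.1
            positivity
        _ = (1 + L) * (((n:ℝ) + 1) * t ^ n) := by ring
    calc (∫⁻ t in Set.Ioc (0:ℝ) (1 - δ),
        ENNReal.ofReal (((n:ℝ) + 1) * t ^ n * Real.log (Real.exp 1 / (1 - t))))
        ≤ ∫⁻ t in Set.Ioc (0:ℝ) (1 - δ),
            ENNReal.ofReal ((1 + L) * (((n:ℝ) + 1) * t ^ n)) :=
          setLIntegral_mono (by
            exact (measurable_const.mul (measurable_const.mul (measurable_id.pow_const n))).ennreal_ofReal) hb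
      _ = ENNReal.ofReal (1 + L) * ∫⁻ t in Set.Ioc (0:ℝ) (1 - δ),
            ENNReal.ofReal (((n:ℝ) + 1) * t ^ n) := by
          simp_rw [ENNReal.ofReal_mul (by linarith : (0:ℝ) ≤ 1 + L)]
          rw [lintegral_const_mul' _ _ ENNReal.ofReal_ne_top]
      _ ≤ ENNReal.ofReal (1 + L) * ∫⁻ t in Set.Ioo (0:ℝ) 1,
            ENNReal.ofReal (((n:ℝ) + 1) * t ^ n) := by
          apply mul_le_mul_right
          apply lintegral_mono_set
          intro x hx
          exact ⟨hx.1, by linarith [hx.2]⟩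
      _ = ENNReal.ofReal (1 + L) := by rw [lint_pow, mul_one]
  -- tail bound
  have htail : (∫⁻ t in Set.Ioo (1 - δ) (1:ℝ),
      ENNReal.ofReal (((n:ℝ) + 1) * t ^ n * Real.log (Real.exp 1 / (1 - t))))
      ≤ ENNReal.ofReal (((n:ℝ) + 1) * (1 + L) * δ) + ENNReal.ofReal (4 * (((n:ℝ) + 1) * δ)) := by
    have hb : ∀ t ∈ Set.Ioo (1 - δ) (1:ℝ),
        ENNReal.ofReal (((n:ℝ) + 1) * t ^ n * Real.log (Real.exp 1 / (1 - t)))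
          ≤ ENNReal.ofReal (((n:ℝ) + 1) * (1 + L))
            + ENNReal.ofReal ((2 * (((n:ℝ) + 1) * Real.sqrt δ)) * (1 - t) ^ (-(1/2) : ℝ)) := by
      intro t ht
      have ht1 : t < 1 := ht.2
      have h1t : 0 < 1 - t := by linarith
      have ht0 : 0 < t := by linarith [ht.1]
      have hrpow : (1 - t) ^ (-(1/2) : ℝ) = (Real.sqrt (1 - t))⁻¹ := by
        rw [Real.rpow_neg h1t.le, Real.sqrt_eq_rpow]
      have hsq : Real.sqrt (δ / (1 - t)) = Real.sqrt δ * (1 - t) ^ (-(1/2) : ℝ) := by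
        rw [Real.sqrt_div hδ0.le, hrpow, div_eq_mul_inv]
      have hlog3 : Real.log (Real.exp 1 / (1 - t))
          ≤ 1 + L + 2 * (Real.sqrt δ * (1 - t) ^ (-(1/2) : ℝ)) := by
        rw [log_form ht1]
        have hdq : Real.log (δ / (1 - t)) = -L - Real.log (1 - t) := by
          rw [Real.log_div hδ0.ne' h1t.ne', hlδ]
        have h2s : Real.log (δ / (1 - t)) ≤ 2 * Real.sqrt (δ / (1 - t)) :=
          log_le_two_sqrt (by positivity)
        rw [hsq] at h2s
        linarith
      have hpow1 : t ^ n ≤ 1 := pow_le_one₀ ht0.le ht1.le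
      have hlogpos : 0 ≤ Real.log (Real.exp 1 / (1 - t)) := by
        rw [log_form ht1]
        have : Real.log (1 - t) ≤ 0 := Real.log_nonpos (by linarith) (by linarith)
        linarith
      have hx : ((n:ℝ) + 1) * t ^ n * Real.log (Real.exp 1 / (1 - t))
          ≤ ((n:ℝ) + 1) * (1 + L) + (2 * (((n:ℝ) + 1) * Real.sqrt δ)) * (1 - t) ^ (-(1/2) : ℝ) := by
        have h1 : ((n:ℝ) + 1) * t ^ n * Real.log (Real.exp 1 / (1 - t))
            ≤ ((n:ℝ) + 1) * Real.log (Real.exp 1 / (1 - t)) := by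
          have := mul_le_mul_of_nonneg_right
            (mul_le_mul_of_nonneg_left hpow1 (by positivity : (0:ℝ) ≤ (n:ℝ) + 1)) hlogpos
          simpa using this
        have h2 : ((n:ℝ) + 1) * Real.log (Real.exp 1 / (1 - t))
            ≤ ((n:ℝ) + 1) * (1 + L + 2 * (Real.sqrt δ * (1 - t) ^ (-(1/2) : ℝ))) :=
          mul_le_mul_of_nonneg_left hlog3 (by positivity)
        nlinarith [h1, h2]
      calc ENNReal.ofReal (((n:ℝ) + 1) * t ^ n * Real.log (Real.exp 1 / (1 - t)))
          ≤ ENNReal.ofReal (((n:ℝ) + 1) * (1 + L)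
              + (2 * (((n:ℝ) + 1) * Real.sqrt δ)) * (1 - t) ^ (-(1/2) : ℝ)) :=
            ENNReal.ofReal_le_ofReal hx
        _ = _ := ENNReal.ofReal_add (by positivity)
              (by positivity)
    calc (∫⁻ t in Set.Ioo (1 - δ) (1:ℝ),
        ENNReal.ofReal (((n:ℝ) + 1) * t ^ n * Real.log (Real.exp 1 / (1 - t))))
        ≤ ∫⁻ t in Set.Ioo (1 - δ) (1:ℝ),
            (ENNReal.ofReal (((n:ℝ) + 1) * (1 + L))
              + ENNReal.ofReal ((2 * (((n:ℝ) + 1) * Real.sqrt δ)) * (1 - t) ^ (-(1/2) : ℝ))) := by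
          exact setLIntegral_mono' measurableSet_Ioo hb
      _ = ENNReal.ofReal (((n:ℝ) + 1) * (1 + L)) * volume (Set.Ioo (1 - δ) (1:ℝ))
          + ∫⁻ t in Set.Ioo (1 - δ) (1:ℝ),
              ENNReal.ofReal ((2 * (((n:ℝ) + 1) * Real.sqrt δ)) * (1 - t) ^ (-(1/2) : ℝ)) := by
          rw [lintegral_add_left measurable_const, setLIntegral_const]
      _ ≤ ENNReal.ofReal (((n:ℝ) + 1) * (1 + L) * δ) + ENNReal.ofReal (4 * (((n:ℝ) + 1) * δ)) := by
          apply add_le_add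
          · rw [Real.volume_Ioo, show (1:ℝ) - (1 - δ) = δ by ring,
              ← ENNReal.ofReal_mul (by positivity)]
          · simp_rw [ENNReal.ofReal_mul (by positivity : (0:ℝ) ≤ 2 * (((n:ℝ) + 1) * Real.sqrt δ))]
            rw [lintegral_const_mul' _ _ ENNReal.ofReal_ne_top, lint_rpow_tail hδ0 hδ1,
              ← ENNReal.ofReal_mul (by positivity)]
            apply ENNReal.ofReal_le_ofReal
            have : Real.sqrt δ * Real.sqrt δ = δ := Real.mul_self_sqrt hδ0.le
            nlinarith [Real.sqrt_nonneg δ]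
  -- combine
  have hJ : J n ≤ ENNReal.ofReal (1 + L) + (ENNReal.ofReal (((n:ℝ) + 1) * (1 + L) * δ)
      + ENNReal.ofReal (4 * (((n:ℝ) + 1) * δ))) := by
    rw [J, hsplit, lintegral_union measurableSet_Ioo hdisj]
    exact add_le_add hhead htail
  calc J n ≤ ENNReal.ofReal (1 + L) + (ENNReal.ofReal (((n:ℝ) + 1) * (1 + L) * δ)
        + ENNReal.ofReal (4 * (((n:ℝ) + 1) * δ))) := hJ
    _ ≤ ENNReal.ofReal (11 * L) := by
        rw [← ENNReal.ofReal_add (by positivity) (by positivity),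
          ← ENNReal.ofReal_add (by positivity) (by positivity)]
        apply ENNReal.ofReal_le_ofReal
        have key : ((n:ℝ) + 1) * (1 + L) * δ ≤ 1 + L := by
          calc ((n:ℝ) + 1) * (1 + L) * δ = (((n:ℝ) + 1) * δ) * (1 + L) := by ring
            _ ≤ 1 * (1 + L) := mul_le_mul_of_nonneg_right hnd1 (by linarith)
            _ = 1 + L := one_mul _
        have key2 : 4 * (((n:ℝ) + 1) * δ) ≤ 4 := by linarith
        linarith
    _ = 11 * ENNReal.ofReal L := by
        rw [ENNReal.ofReal_mul (by norm_num)]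
        norm_num

end LogCoefAux

open Real MeasureTheory ENNReal


end Aux


/-- For `g(z) = Σ cₙ zⁿ` with nonnegative Maclaurin coefficients,
`Σ c_{n+1} log(n+2)` and `∫₀¹ M_∞(t,g') log(e/(1-t)) dt` are comparable up to
absolute constants (in particular one is finite iff the other is). Here
`M_∞(t,g') = Σ (n+1)c_{n+1} tⁿ` since the coefficients are nonnegative. -/
theorem log_coefficient_integral_comparable :
    ∃ C : ℝ≥0∞, 0 < C ∧ C ≠ ⊤ ∧
      ∀ c : ℕ → ℝ, (∀ n, 0 ≤ c n) →
        (∀ t : ℝ, 0 ≤ t → t < 1 → Summable (fun n : ℕ => ((n : ℝ) + 1) * c (n + 1) * t ^ n)) →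
        (∑' n : ℕ, ENNReal.ofReal (c (n + 1) * Real.log ((n : ℝ) + 2))) ≤
            C * ∫⁻ t in Set.Ioo (0:ℝ) 1,
              ENNReal.ofReal ((∑' n : ℕ, ((n : ℝ) + 1) * c (n + 1) * t ^ n) *
                Real.log (Real.exp 1 / (1 - t))) ∧
          (∫⁻ t in Set.Ioo (0:ℝ) 1,
              ENNReal.ofReal ((∑' n : ℕ, ((n : ℝ) + 1) * c (n + 1) * t ^ n) *
                Real.log (Real.exp 1 / (1 - t)))) ≤
            C * ∑' n : ℕ, ENNReal.ofReal (c (n + 1) * Real.log ((n : ℝ) + 2)) := by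
  refine ⟨11, by norm_num, by norm_num, ?_⟩
  intro c hc hsum
  have hId : (∫⁻ t in Set.Ioo (0:ℝ) 1,
      ENNReal.ofReal ((∑' n : ℕ, ((n:ℝ) + 1) * c (n + 1) * t ^ n)
        * Real.log (Real.exp 1 / (1 - t))))
      = ∑' n : ℕ, ENNReal.ofReal (c (n + 1)) * LogCoefAux.J n := by
    have hstep : ∀ t ∈ Set.Ioo (0:ℝ) 1,
        ENNReal.ofReal ((∑' n : ℕ, ((n:ℝ) + 1) * c (n + 1) * t ^ n)
          * Real.log (Real.exp 1 / (1 - t)))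
        = ∑' n : ℕ, ENNReal.ofReal (c (n + 1))
            * ENNReal.ofReal (((n:ℝ) + 1) * t ^ n * Real.log (Real.exp 1 / (1 - t))) := by
      intro t ht
      have hterm : ∀ n : ℕ, 0 ≤ ((n:ℝ) + 1) * c (n + 1) * t ^ n := fun n =>
        mul_nonneg (mul_nonneg (by positivity) (hc _)) (pow_nonneg ht.1.le n)
      rw [ENNReal.ofReal_mul (tsum_nonneg hterm),
        ENNReal.ofReal_tsum_of_nonneg hterm (hsum t ht.1.le ht.2),
        ← ENNReal.tsum_mul_right]
      apply tsum_congr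
      intro n
      rw [← ENNReal.ofReal_mul (hterm n), ← ENNReal.ofReal_mul (hc _)]
      congr 1
      ring
    rw [setLIntegral_congr_fun measurableSet_Ioo hstep,
      lintegral_tsum (fun n => ((LogCoefAux.meas n).const_mul _).aemeasurable)]
    apply tsum_congr
    intro n
    rw [lintegral_const_mul' _ _ ENNReal.ofReal_ne_top]
    rfl
  have hLHS : (∑' n : ℕ, ENNReal.ofReal (c (n + 1) * Real.log ((n:ℝ) + 2)))
      = ∑' n : ℕ, ENNReal.ofReal (c (n + 1)) * ENNReal.ofReal (Real.log ((n:ℝ) + 2)) :=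
    tsum_congr fun n => ENNReal.ofReal_mul (hc _)
  rw [hId, hLHS]
  constructor
  · rw [← ENNReal.tsum_mul_left]
    apply ENNReal.tsum_le_tsum
    intro n
    calc ENNReal.ofReal (c (n + 1)) * ENNReal.ofReal (Real.log ((n:ℝ) + 2))
        ≤ ENNReal.ofReal (c (n + 1)) * (11 * LogCoefAux.J n) :=
          mul_le_mul_right (LogCoefAux.lower n) _
      _ = 11 * (ENNReal.ofReal (c (n + 1)) * LogCoefAux.J n) := by ring
  · rw [← ENNReal.tsum_mul_left]
    apply ENNReal.tsum_le_tsum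
    intro n
    calc ENNReal.ofReal (c (n + 1)) * LogCoefAux.J n
        ≤ ENNReal.ofReal (c (n + 1)) * (11 * ENNReal.ofReal (Real.log ((n:ℝ) + 2))) :=
          mul_le_mul_right (LogCoefAux.upper n) _
      _ = 11 * (ENNReal.ofReal (c (n + 1)) * ENNReal.ofReal (Real.log ((n:ℝ) + 2))) := by ring
end

section
/- For every n ∈ ℕ, ∫_0^1 t^n log(e/(1-t)) dt is comparable (with absolute implicit constants) to log(n+2)/(n+1). -/
open Real

open MeasureTheory Set intervalIntegral


lemma logInt01 : IntervalIntegrable Real.log volume 0 1 := by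
  have h := intervalIntegrable_deriv_of_nonneg (a := (0:ℝ)) (b := 1)
    (g := fun t => t - t * Real.log t) (g' := fun t => -Real.log t)
    ((continuous_id.sub Real.continuous_mul_log).continuousOn)
    (fun x hx => by
      rw [min_def, max_def] at hx
      norm_num at hx
      have := (hasDerivAt_id x).sub (Real.hasDerivAt_mul_log (ne_of_gt hx.1))
      exact this.congr_deriv (by ring))
    (fun x hx => by
      rw [min_def, max_def] at hx
      norm_num at hx
      have : Real.log x ≤ 0 := Real.log_nonpos hx.1.le hx.2.le
      show (0:ℝ) ≤ -Real.log x
      linarith)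
  have h2 := h.neg
  have heq : (-fun t => -Real.log t) = Real.log := by funext t; simp
  rwa [heq] at h2

lemma integral_log_zero {c : ℝ} (hc : 0 ≤ c) (hc1 : c ≤ 1) :
    ∫ x in (0:ℝ)..c, Real.log x = c * Real.log c - c := by
  have hint : IntervalIntegrable Real.log volume 0 c := by
    apply logInt01.mono_set
    rw [Set.uIcc_of_le hc, Set.uIcc_of_le zero_le_one]
    exact Set.Icc_subset_Icc le_rfl hc1
  have := intervalIntegral.integral_eq_sub_of_hasDeriv_right_of_le hc
    (f := fun t => t * Real.log t - t) (f' := Real.log)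
    ((Real.continuous_mul_log.sub continuous_id).continuousOn)
    (fun x hx => by
      have h := (Real.hasDerivAt_mul_log (ne_of_gt hx.1)).sub (hasDerivAt_id x)
      have h2 : Real.log x + 1 - 1 = Real.log x := by ring
      rw [h2] at h
      exact h.hasDerivWithinAt)
    hint
  simpa using this

lemma log1subInt : IntervalIntegrable (fun t => Real.log (1 - t)) volume 0 1 := by
  have h := (logInt01.comp_sub_left 1).symm
  norm_num at h
  exact h

lemma oneSubLogInt : IntervalIntegrable (fun t => 1 - Real.log (1 - t)) volume 0 1 :=
  (_root_.intervalIntegrable_const (c := (1:ℝ))).sub log1subInt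

lemma gInt (n : ℕ) : IntervalIntegrable (fun t => t ^ n * (1 - Real.log (1 - t))) volume 0 1 :=
  oneSubLogInt.continuousOn_mul ((continuous_pow n).continuousOn)

set_option maxHeartbeats 1000000 in
/-- `∫₀¹ tⁿ log(e/(1-t)) dt ≍ log(n+2)/(n+1)` with absolute constants. -/
theorem integral_pow_log_comparable :
    ∃ C₁ C₂ : ℝ, 0 < C₁ ∧ 0 < C₂ ∧ ∀ n : ℕ,
      C₁ * (Real.log ((n : ℝ) + 2) / ((n : ℝ) + 1)) ≤
          (∫ t in (0:ℝ)..1, t ^ n * Real.log (Real.exp 1 / (1 - t))) ∧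
        (∫ t in (0:ℝ)..1, t ^ n * Real.log (Real.exp 1 / (1 - t))) ≤
          C₂ * (Real.log ((n : ℝ) + 2) / ((n : ℝ) + 1)) := by
  refine ⟨1/3, 7, by norm_num, by norm_num, fun n => ?_⟩
  set N : ℝ := (n : ℝ) + 2 with hN
  have hN0 : (0:ℝ) < N := by positivity
  have hn1 : (0:ℝ) < (n:ℝ) + 1 := by positivity
  have hcast : (0:ℝ) ≤ (n:ℝ) := Nat.cast_nonneg n
  set a : ℝ := 1 - 1/N with ha
  have hiN : 0 < 1/N := by positivity
  have hiN1 : 1/N ≤ 1 := by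
    rw [div_le_one hN0]; rw [hN]; linarith
  have ha0 : 0 ≤ a := by rw [ha]; linarith
  have ha1 : a ≤ 1 := by rw [ha]; linarith
  set L : ℝ := Real.log N with hL
  have hL0 : 0 ≤ L := Real.log_nonneg (by rw [hN]; linarith)
  have hL2 : Real.log 2 ≤ L := Real.log_le_log (by norm_num) (by rw [hN]; linarith)
  have hlog2 : (0.6 : ℝ) ≤ Real.log 2 := by
    have := Real.log_two_gt_d9; linarith
  -- rewrite integrand
  have hne : ∀ᵐ x : ℝ ∂volume, x ≠ 1 := by
    rw [MeasureTheory.ae_iff]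
    have : {x : ℝ | ¬ x ≠ 1} = {1} := by ext x; simp
    rw [this]; exact measure_singleton 1
  have hcongr : (∫ t in (0:ℝ)..1, t ^ n * Real.log (Real.exp 1 / (1 - t)))
      = ∫ t in (0:ℝ)..1, t ^ n * (1 - Real.log (1 - t)) := by
    apply intervalIntegral.integral_congr_ae
    filter_upwards [hne] with x hx _
    have h1 : (1:ℝ) - x ≠ 0 := by intro h; apply hx; linarith
    rw [Real.log_div (Real.exp_ne_zero 1) h1, Real.log_exp]
  rw [hcongr]
  set J := ∫ t in (0:ℝ)..1, t ^ n * (1 - Real.log (1 - t)) with hJ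
  -- basic integrabilities on subintervals
  have hsub1 : Set.uIcc (0:ℝ) a ⊆ Set.uIcc (0:ℝ) 1 := by
    rw [Set.uIcc_of_le ha0, Set.uIcc_of_le zero_le_one]
    exact Set.Icc_subset_Icc le_rfl ha1
  have hsub2 : Set.uIcc a (1:ℝ) ⊆ Set.uIcc (0:ℝ) 1 := by
    rw [Set.uIcc_of_le ha1, Set.uIcc_of_le zero_le_one]
    exact Set.Icc_subset_Icc ha0 le_rfl
  have hg1 : IntervalIntegrable (fun t => t ^ n * (1 - Real.log (1 - t))) volume 0 a :=
    (gInt n).mono_set hsub1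
  have hg2 : IntervalIntegrable (fun t => t ^ n * (1 - Real.log (1 - t))) volume a 1 :=
    (gInt n).mono_set hsub2
  have hl2 : IntervalIntegrable (fun t => 1 - Real.log (1 - t)) volume a 1 :=
    oneSubLogInt.mono_set hsub2
  -- pointwise facts
  have hloglea : ∀ t ∈ Set.Icc (0:ℝ) a, -Real.log (1 - t) ≤ L := by
    intro t ht
    have ht2 := ht.2
    rw [ha] at ht2
    have h1 : 1/N ≤ 1 - t := by linarith
    have := Real.log_le_log hiN h1
    rw [Real.log_div one_ne_zero (ne_of_gt hN0), Real.log_one] at this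
    linarith
  -- value of ∫ a..1 of (1 - log (1-t))
  have hval : (∫ t in a..(1:ℝ), (1 - Real.log (1 - t))) = (1/N) * (2 + L) := by
    have h1a : (1:ℝ) - a = 1/N := by rw [ha]; ring
    have hc : (∫ t in a..(1:ℝ), Real.log (1 - t)) = ∫ u in (0:ℝ)..(1/N), Real.log u := by
      have h := intervalIntegral.integral_comp_sub_left (a := a) (b := 1) Real.log 1
      rw [sub_self, h1a] at h
      exact h
    have hlog : Real.log (1/N) = -L := by
      rw [Real.log_div one_ne_zero (ne_of_gt hN0), Real.log_one, hL]; ring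
    rw [intervalIntegral.integral_sub (_root_.intervalIntegrable_const) (log1subInt.mono_set hsub2),
      hc, integral_log_zero hiN.le hiN1, intervalIntegral.integral_const, hlog, h1a, smul_eq_mul]
    ring
  constructor
  · -- LOWER BOUND
    have step1 : (∫ t in a..(1:ℝ), t ^ n * (1 - Real.log (1 - t))) ≤ J := by
      apply intervalIntegral.integral_mono_interval ha0 ha1 le_rfl _ (gInt n)
      filter_upwards [MeasureTheory.ae_restrict_mem measurableSet_Ioc] with x hx
      simp only [Pi.zero_apply]
      have hx0 : 0 < x := hx.1
      have hlx : Real.log (1 - x) ≤ 0 := Real.log_nonpos (by linarith [hx.2]) (by linarith)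
      have : (0:ℝ) ≤ x ^ n := pow_nonneg hx0.le n
      nlinarith
    have step2 : (∫ t in a..(1:ℝ), (1 + L) * t ^ n) ≤
        ∫ t in a..(1:ℝ), t ^ n * (1 - Real.log (1 - t)) := by
      apply intervalIntegral.integral_mono_ae_restrict ha1
        (((continuous_const.mul (continuous_pow n))).intervalIntegrable a 1) hg2
      filter_upwards [MeasureTheory.ae_restrict_mem measurableSet_Icc,
        MeasureTheory.ae_restrict_of_ae hne] with x hx hx1
      have hxa : a ≤ x := hx.1
      have hxlt : x < 1 := lt_of_le_of_ne hx.2 hx1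
      have h1 : 0 < 1 - x := by linarith
      rw [ha] at hxa
      have h2 : 1 - x ≤ 1/N := by linarith
      have h3 : Real.log (1 - x) ≤ -L := by
        have := Real.log_le_log h1 h2
        rw [Real.log_div one_ne_zero (ne_of_gt hN0), Real.log_one] at this
        linarith
      have hx0 : (0:ℝ) ≤ x ^ n := pow_nonneg (le_trans ha0 hx.1) n
      simp only [Pi.mul_apply]
      nlinarith
    have step3 : (∫ t in a..(1:ℝ), (1 + L) * t ^ n) = (1 + L) * ((1 - a^(n+1))/((n:ℝ)+1)) := by
      rw [intervalIntegral.integral_const_mul, integral_pow]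
      push_cast
      ring
    have hexp : a ^ (n+1) ≤ 2/3 := by
      have e1 : a ≤ Real.exp (-(1/N)) := by
        have := Real.add_one_le_exp (-(1/N))
        rw [ha]; linarith
      have e2 : a ^ (n+1) ≤ Real.exp (-(1/N)) ^ (n+1) := pow_le_pow_left₀ ha0 e1 _
      have e3 : Real.exp (-(1/N)) ^ (n+1) = Real.exp (-(((n:ℝ)+1)/N)) := by
        rw [← Real.exp_nat_mul]
        congr 1
        push_cast
        ring
      have e4 : Real.exp (-(((n:ℝ)+1)/N)) ≤ Real.exp (-(1/2 : ℝ)) := by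
        apply Real.exp_le_exp.mpr
        have : (1/2 : ℝ) ≤ ((n:ℝ)+1)/N := by
          rw [div_le_div_iff₀ (by norm_num) hN0, hN]
          linarith
        linarith
      have e5 : Real.exp (-(1/2 : ℝ)) ≤ 2/3 := by
        have h32 : (3/2 : ℝ) ≤ Real.exp (1/2) := by
          have := Real.add_one_le_exp (1/2 : ℝ); linarith
        have hprod : Real.exp (-(1/2 : ℝ)) * Real.exp (1/2) = 1 := by
          rw [← Real.exp_add]; norm_num
        nlinarith [Real.exp_pos (-(1/2 : ℝ))]
      calc a ^ (n+1) ≤ Real.exp (-(1/N)) ^ (n+1) := e2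
        _ = Real.exp (-(((n:ℝ)+1)/N)) := e3
        _ ≤ Real.exp (-(1/2:ℝ)) := e4
        _ ≤ 2/3 := e5
    have final : 1/3 * (L / ((n:ℝ)+1)) ≤ (1 + L) * ((1 - a^(n+1))/((n:ℝ)+1)) := by
      have h13 : (1/3 : ℝ) ≤ 1 - a^(n+1) := by linarith
      have hmm : 1/3 * L ≤ (1 + L) * (1 - a^(n+1)) := by nlinarith
      calc 1/3 * (L / ((n:ℝ)+1)) = (1/3 * L) / ((n:ℝ)+1) := by ring
        _ ≤ ((1 + L) * (1 - a^(n+1))) / ((n:ℝ)+1) := (div_le_div_iff_of_pos_right hn1).mpr hmm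
        _ = (1 + L) * ((1 - a^(n+1))/((n:ℝ)+1)) := by ring
    calc 1/3 * (L / ((n:ℝ)+1)) ≤ (1 + L) * ((1 - a^(n+1))/((n:ℝ)+1)) := final
      _ = ∫ t in a..(1:ℝ), (1 + L) * t ^ n := step3.symm
      _ ≤ ∫ t in a..(1:ℝ), t ^ n * (1 - Real.log (1 - t)) := step2
      _ ≤ J := step1
  · -- UPPER BOUND
    have hsplit : J = (∫ t in (0:ℝ)..a, t ^ n * (1 - Real.log (1 - t)))
        + ∫ t in a..(1:ℝ), t ^ n * (1 - Real.log (1 - t)) := by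
      rw [hJ, ← intervalIntegral.integral_add_adjacent_intervals hg1 hg2]
    have up1 : (∫ t in (0:ℝ)..a, t ^ n * (1 - Real.log (1 - t)))
        ≤ (1 + L) / ((n:ℝ)+1) := by
      have m1 : (∫ t in (0:ℝ)..a, t ^ n * (1 - Real.log (1 - t)))
          ≤ ∫ t in (0:ℝ)..a, (1 + L) * t ^ n := by
        apply intervalIntegral.integral_mono_on ha0 hg1
          (((continuous_const.mul (continuous_pow n))).intervalIntegrable 0 a)
        intro x hx
        have := hloglea x hx
        have hx0 : (0:ℝ) ≤ x ^ n := pow_nonneg hx.1 n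
        simp only [Pi.mul_apply]
        nlinarith
      have m2 : (∫ t in (0:ℝ)..a, (1 + L) * t ^ n) = (1 + L) * (a^(n+1)/((n:ℝ)+1)) := by
        rw [intervalIntegral.integral_const_mul, integral_pow]
        push_cast
        ring
      have han : a ^ (n+1) ≤ 1 := pow_le_one₀ ha0 ha1
      calc (∫ t in (0:ℝ)..a, t ^ n * (1 - Real.log (1 - t)))
          ≤ (1 + L) * (a^(n+1)/((n:ℝ)+1)) := by rw [← m2]; exact m1
        _ ≤ (1 + L) * (1/((n:ℝ)+1)) :=
            mul_le_mul_of_nonneg_left ((div_le_div_iff_of_pos_right hn1).mpr han) (by linarith)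
        _ = (1 + L) / ((n:ℝ)+1) := by ring
    have up2 : (∫ t in a..(1:ℝ), t ^ n * (1 - Real.log (1 - t)))
        ≤ (1/N) * (2 + L) := by
      rw [← hval]
      apply intervalIntegral.integral_mono_on ha1 hg2 hl2
      intro x hx
      have hx0 : 0 ≤ x := le_trans ha0 hx.1
      have hxn : x ^ n ≤ 1 := pow_le_one₀ hx0 hx.2
      have hlx : Real.log (1 - x) ≤ 0 := Real.log_nonpos (by linarith [hx.2]) (by linarith)
      have hxn0 : (0:ℝ) ≤ x ^ n := by positivity
      nlinarith
    have hNineq : (1/N) * (2 + L) ≤ (2 + L) / ((n:ℝ)+1) := by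
      have heq : (1/N) * (2 + L) = (2 + L) / N := by ring
      rw [heq]
      apply div_le_div_of_nonneg_left (by linarith) hn1
      rw [hN]; linarith
    have h37 : (3 : ℝ) + 2*L ≤ 7 * L := by linarith
    calc J ≤ (1 + L) / ((n:ℝ)+1) + (1/N) * (2 + L) := by rw [hsplit]; linarith
      _ ≤ (1 + L) / ((n:ℝ)+1) + (2 + L) / ((n:ℝ)+1) := by linarith
      _ = (3 + 2*L) / ((n:ℝ)+1) := by ring
      _ ≤ 7 * L / ((n:ℝ)+1) := (div_le_div_iff_of_pos_right hn1).mpr h37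
      _ = 7 * (L / ((n:ℝ)+1)) := by ring
end

section
/- If g is analytic on the unit disc 𝔻 with ∫_0^1 M_∞(s,g') log(e/(1-s)) ds < ∞, then for every analytic f on 𝔻 the function T_g(f)(z) = ∫_0^z f(ζ)g'(ζ) dζ is bounded on 𝔻, with sup_{z∈𝔻} |T_g(f)(z)| ≤ ‖f‖_{H^∞_log} · ∫_0^1 M_∞(s,g') log(e/(1-s)) ds, where ‖f‖_{H^∞_log} = sup_{z∈𝔻} |f(z)| (log(e/(1-|z|)))^{-1}. -/
open Real Complex MeasureTheory

/-- If `∫₀¹ M_∞(s,g') log(e/(1-s)) ds < ∞`, then `T_g` maps `H^∞_log` into `H^∞`: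
for every analytic `f` on the disc with `|f(z)| ≤ B·log(e/(1-|z|))`, the function
`T_g(f)(z) = ∫₀^z f(ζ)g'(ζ)dζ` satisfies
`|T_g(f)(z)| ≤ B · ∫₀¹ M_∞(s,g') log(e/(1-s)) ds` for all `z ∈ 𝔻`. -/
theorem Tg_bounded_Hinftylog_to_Hinfty (g : ℂ → ℂ)
    (hg : DifferentiableOn ℂ g (Metric.ball (0 : ℂ) 1))
    (M : ℝ → ℝ)
    (hM : ∀ s : ℝ, 0 ≤ s → s < 1 →
      IsGreatest ((fun z : ℂ => ‖deriv g z‖) '' Metric.sphere (0 : ℂ) s) (M s))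
    (hint : IntervalIntegrable (fun s : ℝ => M s * Real.log (Real.exp 1 / (1 - s)))
      MeasureTheory.volume 0 1)
    (f : ℂ → ℂ) (hf : DifferentiableOn ℂ f (Metric.ball (0 : ℂ) 1))
    (B : ℝ) (hB : ∀ z : ℂ, ‖z‖ < 1 → ‖f z‖ ≤ B * Real.log (Real.exp 1 / (1 - ‖z‖))) :
    ∀ z : ℂ, ‖z‖ < 1 →
      ‖∫ t in (0:ℝ)..1, f ((t : ℂ) * z) * deriv g ((t : ℂ) * z) * z‖ ≤
        B * ∫ s in (0:ℝ)..1, M s * Real.log (Real.exp 1 / (1 - s)) := by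
  -- basic facts
  have hB0 : 0 ≤ B := by
    have := hB 0 (by norm_num)
    simpa using le_trans (norm_nonneg _) this
  have hMnn : ∀ s : ℝ, 0 ≤ s → s < 1 → 0 ≤ M s := by
    intro s hs hs1
    obtain ⟨x, -, hx⟩ := (hM s hs hs1).1
    rw [← hx]; positivity
  have hL1 : ∀ s : ℝ, s < 1 → 0 ≤ s → 1 ≤ Real.log (Real.exp 1 / (1 - s)) := by
    intro s hs1 hs
    have h1s : 0 < 1 - s := by linarith
    calc (1:ℝ) = Real.log (Real.exp 1) := (Real.log_exp 1).symm
    _ ≤ Real.log (Real.exp 1 / (1 - s)) := by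
        apply Real.log_le_log (Real.exp_pos 1)
        rw [le_div_iff₀ h1s]
        nlinarith [Real.exp_pos 1, Real.add_one_le_exp (1:ℝ)]
  have hnn : ∀ s ∈ Set.Icc (0:ℝ) 1, 0 ≤ M s * Real.log (Real.exp 1 / (1 - s)) := by
    intro s hs
    rcases eq_or_lt_of_le hs.2 with h1 | h1
    · simp [h1]
    · exact mul_nonneg (hMnn s hs.1 h1) (le_trans zero_le_one (hL1 s h1 hs.1))
  have hIpos : 0 ≤ ∫ s in (0:ℝ)..1, M s * Real.log (Real.exp 1 / (1 - s)) :=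
    intervalIntegral.integral_nonneg zero_le_one hnn
  intro z hz
  set r := ‖z‖ with hr
  have hr0 : 0 ≤ r := norm_nonneg z
  rcases eq_or_lt_of_le hr0 with hr0' | hr0'
  · -- z = 0
    have hz0 : z = 0 := by rwa [← norm_eq_zero, ← hr, eq_comm]
    simp only [hz0, mul_zero]
    simpa using mul_nonneg hB0 hIpos
  -- z ≠ 0
  have hball : ∀ t : ℝ, t ∈ Set.Icc (0:ℝ) 1 → ((t:ℂ)*z) ∈ Metric.ball (0:ℂ) 1 := by
    intro t ht
    simp only [Metric.mem_ball, dist_zero_right, norm_mul, Complex.norm_real,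
      Real.norm_eq_abs, _root_.abs_of_nonneg ht.1]
    calc t * ‖z‖ ≤ 1 * ‖z‖ := by nlinarith [ht.2, hr0]
    _ < 1 := by simpa using hz
  have hganal : AnalyticOnNhd ℂ g (Metric.ball (0:ℂ) 1) :=
    hg.analyticOnNhd Metric.isOpen_ball
  have hg'cont : ContinuousOn (deriv g) (Metric.ball (0:ℂ) 1) :=
    (hganal.deriv_of_isOpen Metric.isOpen_ball).continuousOn
  have hcm : Continuous fun t : ℝ => ((t:ℂ)*z) := by continuity
  set F : ℝ → ℂ := fun t => f ((t:ℂ)*z) * deriv g ((t:ℂ)*z) * z with hF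
  have hFcont : ContinuousOn F (Set.Icc 0 1) := by
    apply ContinuousOn.mul _ continuousOn_const
    exact ContinuousOn.mul
      ((hf.continuousOn.comp hcm.continuousOn) hball)
      ((hg'cont.comp hcm.continuousOn) hball)
  have hFint : IntervalIntegrable F volume 0 1 :=
    hFcont.intervalIntegrable_of_Icc zero_le_one
  set G : ℝ → ℝ := fun t => B * (M (t*r) * Real.log (Real.exp 1 / (1 - t*r))) * r with hG
  have hGint : IntervalIntegrable G volume 0 1 := by
    have h1 : IntervalIntegrable (fun s : ℝ => M s * Real.log (Real.exp 1 / (1 - s)))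
        volume 0 r := hint.mono_set (by
      rw [Set.uIcc_of_le hr0, Set.uIcc_of_le zero_le_one]
      exact Set.Icc_subset_Icc le_rfl hz.le)
    have h2 := (h1.comp_mul_right (c := r))
    simp only [zero_div, div_self (ne_of_gt hr0')] at h2
    exact (h2.const_mul B).mul_const r
  have hbound : ∀ t ∈ Set.Icc (0:ℝ) 1, ‖F t‖ ≤ G t := by
    intro t ht
    have hmem := hball t ht
    have hnorm : ‖(t:ℂ)*z‖ = t * r := by
      rw [norm_mul, Complex.norm_real, Real.norm_eq_abs, _root_.abs_of_nonneg ht.1]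
    have htr0 : 0 ≤ t*r := mul_nonneg ht.1 hr0
    have htr1 : t*r < 1 := by
      rw [← hnorm]; simpa [dist_zero_right] using hmem
    have hfb : ‖f ((t:ℂ)*z)‖ ≤ B * Real.log (Real.exp 1 / (1 - t*r)) := by
      have := hB ((t:ℂ)*z) (by simpa [dist_zero_right] using hmem)
      rwa [hnorm] at this
    have hgb : ‖deriv g ((t:ℂ)*z)‖ ≤ M (t*r) := by
      apply (hM (t*r) htr0 htr1).2
      exact ⟨(t:ℂ)*z, by simp only [Metric.mem_sphere, dist_zero_right]; exact hnorm, rfl⟩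
    have hLnn : 0 ≤ Real.log (Real.exp 1 / (1 - t*r)) :=
      le_trans zero_le_one (hL1 _ htr1 htr0)
    calc ‖F t‖ = ‖f ((t:ℂ)*z)‖ * ‖deriv g ((t:ℂ)*z)‖ * r := by
          rw [hF]; rw [norm_mul, norm_mul]
    _ ≤ (B * Real.log (Real.exp 1 / (1 - t*r))) * M (t*r) * r := by
          apply mul_le_mul_of_nonneg_right _ hr0
          exact mul_le_mul hfb hgb (norm_nonneg _) (by positivity)
    _ = G t := by rw [hG]; ring
  calc ‖∫ t in (0:ℝ)..1, F t‖ ≤ ∫ t in (0:ℝ)..1, ‖F t‖ :=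
        intervalIntegral.norm_integral_le_integral_norm zero_le_one
  _ ≤ ∫ t in (0:ℝ)..1, G t :=
        intervalIntegral.integral_mono_on zero_le_one hFint.norm hGint hbound
  _ = B * ∫ s in (0:ℝ)..r, M s * Real.log (Real.exp 1 / (1 - s)) := by
        rw [hG]
        have := intervalIntegral.smul_integral_comp_mul_right
          (fun s : ℝ => M s * Real.log (Real.exp 1 / (1 - s))) r (a := 0) (b := 1)
        simp only [smul_eq_mul, zero_mul, one_mul] at this
        have h2 : (fun t : ℝ => B * (M (t*r) * Real.log (Real.exp 1/(1-t*r))) * r)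
            = fun t : ℝ => B * (r * (M (t*r) * Real.log (Real.exp 1/(1-t*r)))) :=
          funext fun t => by ring
        simp only [h2, intervalIntegral.integral_const_mul, this]
  _ ≤ B * ∫ s in (0:ℝ)..1, M s * Real.log (Real.exp 1 / (1 - s)) := by
        apply mul_le_mul_of_nonneg_left _ hB0
        apply intervalIntegral.integral_mono_interval le_rfl hr0 hz.le _ hint
        filter_upwards [ae_restrict_mem measurableSet_Ioc] with s hs
        exact hnn s ⟨hs.1.le, hs.2⟩
end

section
/- For each radial weight ν on [0,1) (a nonnegative integrable function) and each n ∈ {1,2}, there is a constant C = C(ν) > 0 such that ∫_0^1 s^x (log(1/s))^n ν(s) ds ≤ C ∫_0^1 s^x ν(s) ds for all real x ≥ 2. -/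
open Real MeasureTheory

private lemma sq_mul_log_pow_le_one {s : ℝ} (hs0 : 0 < s) (hs1 : s ≤ 1) :
    ∀ n ∈ ({1, 2} : Set ℕ), s ^ (2:ℝ) * Real.log (1 / s) ^ n ≤ 1 := by
  intro n hn
  have hL0 : 0 ≤ Real.log (1 / s) := Real.log_nonneg (by
    rw [le_div_iff₀ hs0]; linarith)
  have hsL : s * Real.log (1 / s) ≤ 1 := by
    have h := Real.log_le_sub_one_of_pos (show (0:ℝ) < 1 / s by positivity)
    have h2 : s * Real.log (1 / s) ≤ s * (1 / s - 1) :=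
      mul_le_mul_of_nonneg_left h hs0.le
    have h3 : s * (1 / s - 1) = 1 - s := by field_simp
    linarith
  have h2 : s ^ (2:ℝ) = s * s := by
    rw [show (2:ℝ) = ((2:ℕ):ℝ) by norm_num, Real.rpow_natCast]; ring
  rcases hn with rfl | hn
  · rw [h2]; nlinarith
  · simp only [Set.mem_singleton_iff] at hn; subst hn
    rw [h2]; nlinarith [mul_nonneg hs0.le hL0]

/-- For a radial weight `ν` and `n ∈ {1,2}` there is `C = C(ν) > 0` with
`∫₀¹ s^x (log(1/s))ⁿ ν(s) ds ≤ C ∫₀¹ s^x ν(s) ds` for all real `x ≥ 2`. -/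
theorem radial_weight_log_moment (ν : ℝ → ℝ)
    (hνpos : ∀ s ∈ Set.Ico (0:ℝ) 1, 0 ≤ ν s)
    (hνint : IntegrableOn ν (Set.Ico (0:ℝ) 1)) :
    ∃ C : ℝ, 0 < C ∧ ∀ n ∈ ({1, 2} : Set ℕ), ∀ x : ℝ, 2 ≤ x →
      (∫ s in (0:ℝ)..1, s ^ x * Real.log (1 / s) ^ n * ν s) ≤
        C * ∫ s in (0:ℝ)..1, s ^ x * ν s := by
  have hiv : ∀ f : ℝ → ℝ, (∫ s in (0:ℝ)..1, f s) = ∫ s in Set.Ioo (0:ℝ) 1, f s := by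
    intro f
    rw [intervalIntegral.integral_of_le zero_le_one,
      MeasureTheory.integral_Ioc_eq_integral_Ioo]
  have hν1 : IntegrableOn ν (Set.Ioo (0:ℝ) 1) := hνint.mono_set Set.Ioo_subset_Ico_self
  have hνpos' : ∀ s ∈ Set.Ioo (0:ℝ) 1, 0 ≤ ν s := fun s hs => hνpos s ⟨hs.1.le, hs.2⟩
  have hνae : 0 ≤ᵐ[volume.restrict (Set.Ioo (0:ℝ) 1)] ν := by
    filter_upwards [ae_restrict_mem measurableSet_Ioo] with s hs using hνpos' s hs
  have hwmeas : ∀ (x : ℝ) (n : ℕ),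
      AEStronglyMeasurable (fun s : ℝ => s ^ x * Real.log (1 / s) ^ n)
        (volume.restrict (Set.Ioo (0:ℝ) 1)) :=
    fun x n => ((measurable_id.pow measurable_const).mul
      ((Real.measurable_log.comp (measurable_const.div measurable_id)).pow
        measurable_const)).aestronglyMeasurable
  have hbound : ∀ n ∈ ({1,2} : Set ℕ), ∀ x : ℝ, 2 ≤ x → ∀ s ∈ Set.Ioo (0:ℝ) 1,
      0 ≤ s ^ x * Real.log (1 / s) ^ n ∧ s ^ x * Real.log (1 / s) ^ n ≤ 1 := by
    intro n hn x hx s hs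
    have hs0 : (0:ℝ) < s := hs.1
    have hL0 : 0 ≤ Real.log (1 / s) := Real.log_nonneg (by
      rw [le_div_iff₀ hs0]; linarith [hs.2])
    refine ⟨mul_nonneg (Real.rpow_nonneg hs0.le x) (pow_nonneg hL0 n), ?_⟩
    have key := sq_mul_log_pow_le_one hs0 hs.2.le n hn
    have hsplit : s ^ x = s ^ (x - 2) * s ^ (2:ℝ) := by
      rw [← Real.rpow_add hs0]; ring_nf
    have h1 : s ^ (x - 2) ≤ 1 := Real.rpow_le_one hs0.le hs.2.le (by linarith)
    have h0 : 0 ≤ s ^ (x - 2) := Real.rpow_nonneg hs0.le _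
    have h2 : 0 ≤ s ^ (2:ℝ) * Real.log (1 / s) ^ n :=
      mul_nonneg (Real.rpow_nonneg hs0.le _) (pow_nonneg hL0 n)
    calc s ^ x * Real.log (1 / s) ^ n
        = s ^ (x - 2) * (s ^ (2:ℝ) * Real.log (1 / s) ^ n) := by rw [hsplit]; ring
      _ ≤ 1 * 1 := mul_le_mul h1 key h2 (by norm_num)
      _ = 1 := by norm_num
  have hfint : ∀ n ∈ ({1,2} : Set ℕ), ∀ x : ℝ, 2 ≤ x →
      IntegrableOn (fun s => s ^ x * Real.log (1 / s) ^ n * ν s) (Set.Ioo (0:ℝ) 1) := by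
    intro n hn x hx
    apply Integrable.bdd_mul (c := 1) hν1 (hwmeas x n)
    filter_upwards [ae_restrict_mem measurableSet_Ioo] with s hs
    rcases hbound n hn x hx s hs with ⟨h0, h1⟩
    rw [Real.norm_eq_abs, abs_of_nonneg h0]; exact h1
  have hgint : ∀ x : ℝ, 2 ≤ x →
      IntegrableOn (fun s => s ^ x * ν s) (Set.Ioo (0:ℝ) 1) := by
    intro x hx
    apply Integrable.bdd_mul (c := 1) hν1
      (show Measurable fun s : ℝ => s ^ x from
        measurable_id.pow measurable_const).aestronglyMeasurable
    filter_upwards [ae_restrict_mem measurableSet_Ioo] with s hs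
    rw [Real.norm_eq_abs, abs_of_nonneg (Real.rpow_nonneg hs.1.le x)]
    exact Real.rpow_le_one hs.1.le hs.2.le (by linarith)
  set I : ℝ := ∫ s in Set.Ioo (0:ℝ) 1, ν s with hIdef
  by_cases hI0 : I = 0
  · -- the weight vanishes a.e.; both sides are zero
    refine ⟨1, one_pos, ?_⟩
    intro n hn x hx
    have hν0 : ν =ᵐ[volume.restrict (Set.Ioo (0:ℝ) 1)] 0 :=
      (MeasureTheory.integral_eq_zero_iff_of_nonneg_ae hνae hν1).mp hI0
    have hz : ∀ w : ℝ → ℝ, (∫ s in Set.Ioo (0:ℝ) 1, w s * ν s) = 0 := by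
      intro w
      have : (fun s => w s * ν s) =ᵐ[volume.restrict (Set.Ioo (0:ℝ) 1)] (fun _ => 0) := by
        filter_upwards [hν0] with s hs
        simp [hs]
      rw [MeasureTheory.integral_congr_ae this, integral_zero]
    rw [hiv, hiv, hz (fun s => s ^ x * Real.log (1 / s) ^ n), hz (fun s => s ^ x)]
    norm_num
  · have hIpos : 0 < I :=
      lt_of_le_of_ne (MeasureTheory.integral_nonneg_of_ae hνae) (Ne.symm hI0)
    -- find `a ∈ (0,1)` carrying positive mass of ν on (a,1)
    obtain ⟨a, ha0, ha1, hm⟩ :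
        ∃ a : ℝ, 0 < a ∧ a < 1 ∧ 0 < ∫ s in Set.Ioo a 1, ν s := by
      set S : ℕ → Set ℝ := fun i => Set.Ioo (1/((i:ℝ)+2)) 1 with hS
      have hsm : ∀ i, MeasurableSet (S i) := fun i => measurableSet_Ioo
      have hmono : Monotone S := by
        intro i j hij
        apply Set.Ioo_subset_Ioo _ le_rfl
        apply one_div_le_one_div_of_le (by positivity)
        have : (i:ℝ) ≤ j := Nat.cast_le.mpr hij
        linarith
      have hunion : (⋃ i, S i) = Set.Ioo 0 1 := by
        ext s
        simp only [hS, Set.mem_iUnion, Set.mem_Ioo]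
        constructor
        · rintro ⟨i, h1, h2⟩
          refine ⟨lt_trans (by positivity) h1, h2⟩
        · rintro ⟨h1, h2⟩
          obtain ⟨i, hi⟩ := exists_nat_gt (1/s)
          refine ⟨i, ?_, h2⟩
          rw [div_lt_iff₀ (by positivity)]
          rw [div_lt_iff₀ h1] at hi
          nlinarith [Nat.cast_nonneg (α := ℝ) i]
      have htend := MeasureTheory.tendsto_setIntegral_of_monotone hsm hmono
        (by rw [hunion]; exact hν1)
      rw [hunion] at htend
      obtain ⟨i, hi⟩ := (htend.eventually (eventually_gt_nhds hIpos)).exists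
      exact ⟨1/((i:ℝ)+2), by positivity,
        by rw [div_lt_one (by positivity)]; nlinarith [Nat.cast_nonneg (α := ℝ) i], hi⟩
    set m : ℝ := ∫ s in Set.Ioo a 1, ν s with hmdef
    have hLa : 0 < Real.log (1/a) := Real.log_pos (by rw [lt_div_iff₀ ha0]; linarith)
    have hsub : Set.Ioo a 1 ⊆ Set.Ioo (0:ℝ) 1 := Set.Ioo_subset_Ioo ha0.le le_rfl
    have hsub1 : Set.Ioc 0 a ⊆ Set.Ioo (0:ℝ) 1 :=
      fun s hs => ⟨hs.1, lt_of_le_of_lt hs.2 ha1⟩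
    have hdisj : Disjoint (Set.Ioc (0:ℝ) a) (Set.Ioo a 1) := by
      rw [Set.disjoint_left]
      rintro s ⟨_, h1⟩ ⟨h2, _⟩
      exact absurd h1 (not_le.mpr h2)
    have hDpos : 0 < I / (a^2 * m) := by positivity
    refine ⟨I / (a^2 * m) + Real.log (1/a) + Real.log (1/a)^2 + 1, by positivity, ?_⟩
    intro n hn x hx
    rw [hiv, hiv]
    set G : ℝ := ∫ s in Set.Ioo (0:ℝ) 1, s ^ x * ν s with hGdef
    -- lower bound for G
    have hG1 : a ^ x * m ≤ ∫ s in Set.Ioo a 1, s ^ x * ν s := by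
      rw [hmdef, ← MeasureTheory.integral_const_mul]
      apply MeasureTheory.setIntegral_mono_on
        ((hν1.mono_set hsub).const_mul _) ((hgint x hx).mono_set hsub) measurableSet_Ioo
      intro s hs
      exact mul_le_mul_of_nonneg_right
        (Real.rpow_le_rpow ha0.le hs.1.le (by linarith)) (hνpos' s (hsub hs))
    have hG2 : (∫ s in Set.Ioo a 1, s ^ x * ν s) ≤ G := by
      apply MeasureTheory.setIntegral_mono_set (hgint x hx)
      · filter_upwards [ae_restrict_mem measurableSet_Ioo] with s hs
        exact mul_nonneg (Real.rpow_nonneg hs.1.le x) (hνpos' s hs)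
      · exact HasSubset.Subset.eventuallyLE hsub
    have hGm : a ^ x * m ≤ G := le_trans hG1 hG2
    have hG0 : 0 ≤ G := le_trans (by positivity) hGm
    -- split the left-hand side
    have hsplitset : Set.Ioc (0:ℝ) a ∪ Set.Ioo a 1 = Set.Ioo (0:ℝ) 1 :=
      Set.Ioc_union_Ioo_eq_Ioo ha0.le ha1
    have hFsplit : (∫ s in Set.Ioo (0:ℝ) 1, s ^ x * Real.log (1/s) ^ n * ν s)
        = (∫ s in Set.Ioc (0:ℝ) a, s ^ x * Real.log (1/s) ^ n * ν s)
          + ∫ s in Set.Ioo a 1, s ^ x * Real.log (1/s) ^ n * ν s := by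
      rw [← hsplitset, MeasureTheory.setIntegral_union hdisj measurableSet_Ioo
        ((hfint n hn x hx).mono_set hsub1) ((hfint n hn x hx).mono_set hsub)]
    -- bound on (0,a]
    have hB1 : (∫ s in Set.Ioc (0:ℝ) a, s ^ x * Real.log (1/s) ^ n * ν s)
        ≤ a ^ (x-2) * I := by
      have step1 : (∫ s in Set.Ioc (0:ℝ) a, s ^ x * Real.log (1/s) ^ n * ν s)
          ≤ ∫ s in Set.Ioc (0:ℝ) a, a ^ (x-2) * ν s := by
        apply MeasureTheory.setIntegral_mono_on ((hfint n hn x hx).mono_set hsub1)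
          ((hν1.mono_set hsub1).const_mul _) measurableSet_Ioc
        intro s hs
        have hs0 : (0:ℝ) < s := hs.1
        have hL0 : 0 ≤ Real.log (1 / s) := Real.log_nonneg (by
          rw [le_div_iff₀ hs0]; linarith [(hsub1 hs).2])
        have key := sq_mul_log_pow_le_one hs0 (hsub1 hs).2.le n hn
        have hr : s ^ (x-2) ≤ a ^ (x-2) := Real.rpow_le_rpow hs0.le hs.2 (by linarith)
        have hsplit : s ^ x = s ^ (x - 2) * s ^ (2:ℝ) := by
          rw [← Real.rpow_add hs0]; ring_nf
        have h2 : 0 ≤ s ^ (2:ℝ) * Real.log (1 / s) ^ n :=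
          mul_nonneg (Real.rpow_nonneg hs0.le _) (pow_nonneg hL0 n)
        have hmain : s ^ (x-2) * (s ^ (2:ℝ) * Real.log (1 / s) ^ n) ≤ a ^ (x-2) * 1 :=
          mul_le_mul hr key h2 (Real.rpow_nonneg ha0.le _)
        calc s ^ x * Real.log (1/s) ^ n * ν s
            = s ^ (x-2) * (s ^ (2:ℝ) * Real.log (1 / s) ^ n) * ν s := by
              rw [hsplit]; ring
          _ ≤ a ^ (x-2) * 1 * ν s :=
              mul_le_mul_of_nonneg_right hmain (hνpos' s (hsub1 hs))
          _ = a ^ (x-2) * ν s := by ring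
      have step2 : (∫ s in Set.Ioc (0:ℝ) a, a ^ (x-2) * ν s) ≤ a ^ (x-2) * I := by
        rw [MeasureTheory.integral_const_mul]
        apply mul_le_mul_of_nonneg_left _ (Real.rpow_nonneg ha0.le _)
        apply MeasureTheory.setIntegral_mono_set hν1 hνae
        exact HasSubset.Subset.eventuallyLE hsub1
      exact le_trans step1 step2
    -- bound on (a,1)
    have hB2 : (∫ s in Set.Ioo a 1, s ^ x * Real.log (1/s) ^ n * ν s)
        ≤ Real.log (1/a) ^ n * G := by
      have step1 : (∫ s in Set.Ioo a 1, s ^ x * Real.log (1/s) ^ n * ν s)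
          ≤ ∫ s in Set.Ioo a 1, Real.log (1/a) ^ n * (s ^ x * ν s) := by
        apply MeasureTheory.setIntegral_mono_on ((hfint n hn x hx).mono_set hsub)
          (((hgint x hx).mono_set hsub).const_mul _) measurableSet_Ioo
        intro s hs
        have hs0 : (0:ℝ) < s := lt_trans ha0 hs.1
        have hL0 : 0 ≤ Real.log (1 / s) := Real.log_nonneg (by
          rw [le_div_iff₀ hs0]; linarith [hs.2])
        have hLs : Real.log (1/s) ≤ Real.log (1/a) :=
          Real.log_le_log (by positivity) (one_div_le_one_div_of_le ha0 hs.1.le)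
        have hpow : Real.log (1/s) ^ n ≤ Real.log (1/a) ^ n :=
          pow_le_pow_left₀ hL0 hLs n
        have hgn : 0 ≤ s ^ x * ν s :=
          mul_nonneg (Real.rpow_nonneg hs0.le x) (hνpos' s (hsub hs))
        calc s ^ x * Real.log (1/s) ^ n * ν s
            = Real.log (1/s) ^ n * (s ^ x * ν s) := by ring
          _ ≤ Real.log (1/a) ^ n * (s ^ x * ν s) :=
              mul_le_mul_of_nonneg_right hpow hgn
      have step2 : (∫ s in Set.Ioo a 1, Real.log (1/a) ^ n * (s ^ x * ν s))
          ≤ Real.log (1/a) ^ n * G := by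
        rw [MeasureTheory.integral_const_mul]
        exact mul_le_mul_of_nonneg_left hG2 (pow_nonneg hLa.le n)
      exact le_trans step1 step2
    -- put things together
    have hkey : a ^ (x-2) * I = I / (a^2 * m) * (a ^ x * m) := by
      have hpow2 : a ^ (2:ℕ) = a ^ ((2:ℕ):ℝ) := (Real.rpow_natCast a 2).symm
      have ha2 : a ^ (x-2) * a ^ (2:ℕ) = a ^ x := by
        rw [hpow2, ← Real.rpow_add ha0]; norm_num
      have hm0 : m ≠ 0 := ne_of_gt hm
      have ha0' : (a:ℝ) ^ 2 ≠ 0 := by positivity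
      field_simp
      linear_combination ha2
    have hB1' : a ^ (x-2) * I ≤ I / (a^2 * m) * G := by
      rw [hkey]
      exact mul_le_mul_of_nonneg_left hGm hDpos.le
    have hLan : Real.log (1/a) ^ n ≤ Real.log (1/a) + Real.log (1/a) ^ 2 := by
      rcases hn with rfl | hn
      · nlinarith
      · simp only [Set.mem_singleton_iff] at hn; subst hn
        nlinarith
    calc (∫ s in Set.Ioo (0:ℝ) 1, s ^ x * Real.log (1/s) ^ n * ν s)
        ≤ I / (a^2 * m) * G + Real.log (1/a) ^ n * G := by
          rw [hFsplit]
          exact add_le_add (le_trans hB1 hB1') hB2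
      _ ≤ (I / (a^2 * m) + Real.log (1/a) + Real.log (1/a)^2 + 1) * G := by
          nlinarith [mul_le_mul_of_nonneg_right hLan hG0]
end

section
/- Let g be analytic on the unit disc with nonnegative Maclaurin coefficients c_n ≥ 0, and suppose Σ c_n < ∞. If sup_{k≥0} (k+1) Σ_{n≥0} (n+1)c_{n+1}/(n+k+1) < ∞, then for every f ∈ HL_1 the function T_g(f) is bounded on 𝔻 and sup_{z∈𝔻}|T_g(f)(z)| ≤ ‖f‖_{HL_1} · sup_{k≥0} ((k+1) Σ_{n≥0} (n+1)c_{n+1}/(n+k+1)). -/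
set_option maxHeartbeats 1000000


open Real Complex MeasureTheory

private lemma summable_geom_aux {r : ℝ} (h0 : 0 ≤ r) (h1 : r < 1) :
    Summable (fun n : ℕ => ((n : ℝ) + 1) * r ^ n) := by
  have h1' : ‖r‖ < 1 := by rwa [Real.norm_eq_abs, _root_.abs_of_nonneg h0]
  have h2 := summable_pow_mul_geometric_of_norm_lt_one 1 h1'
  simp only [pow_one] at h2
  simpa [add_mul, one_mul] using h2.add (summable_geometric_of_lt_one h0 h1)

private lemma hasDerivAt_cseries (c : ℕ → ℝ) (hc : ∀ n, 0 ≤ c n) (hcs : Summable c)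
    {w : ℂ} (hw : ‖w‖ < 1) :
    HasDerivAt (fun y : ℂ => ∑' n : ℕ, (c n : ℂ) * y ^ n)
      (∑' n : ℕ, ((n : ℂ) + 1) * (c (n + 1) : ℂ) * w ^ n) w := by
  set r : ℝ := (‖w‖ + 1) / 2 with hrdef
  have hr0 : 0 < r := by positivity
  have hwr : ‖w‖ < r := by rw [hrdef]; linarith
  have hr1 : r < 1 := by rw [hrdef]; linarith
  set Cc : ℝ := ∑' m, c m with hCcdef
  have hCc : ∀ n, c n ≤ Cc := fun n => Summable.le_tsum hcs n (fun j _ => hc j)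
  have hCc0 : 0 ≤ Cc := le_trans (hc 0) (hCc 0)
  set u : ℕ → ℝ := fun n => (Cc / r) * ((n : ℝ) * r ^ n) with hudef
  have hu : Summable u := by
    apply Summable.mul_left
    have h1' : ‖r‖ < 1 := by rwa [Real.norm_eq_abs, _root_.abs_of_nonneg hr0.le]
    simpa using summable_pow_mul_geometric_of_norm_lt_one 1 h1'
  have hbound : ∀ (n : ℕ) (y : ℂ), y ∈ Metric.ball (0 : ℂ) r →
      ‖(c n : ℂ) * ((n : ℂ) * y ^ (n - 1))‖ ≤ u n := by
    intro n y hy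
    rw [mem_ball_zero_iff] at hy
    rw [norm_mul, norm_mul, norm_pow, Complex.norm_real, Complex.norm_natCast,
      Real.norm_eq_abs, _root_.abs_of_nonneg (hc n)]
    cases n with
    | zero => simp [hudef]
    | succ m =>
      simp only [Nat.add_sub_cancel, hudef]
      have h1 : ‖y‖ ^ m ≤ r ^ m := pow_le_pow_left₀ (norm_nonneg _) hy.le m
      have h2 : c (m + 1) * (((m : ℕ) + 1 : ℕ) * ‖y‖ ^ m) ≤ Cc * (((m : ℝ) + 1) * r ^ m) := by
        push_cast
        apply mul_le_mul (hCc _) _ (by positivity) hCc0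
        exact mul_le_mul_of_nonneg_left h1 (by positivity)
      calc c (m + 1) * ((((m : ℕ) + 1 : ℕ) : ℝ) * ‖y‖ ^ m)
          ≤ Cc * (((m : ℝ) + 1) * r ^ m) := by push_cast at h2 ⊢; exact h2
        _ = Cc / r * ((((m : ℕ) + 1 : ℕ) : ℝ) * r ^ (m + 1)) := by
            push_cast; field_simp; ring
  have hder := hasDerivAt_tsum_of_isPreconnected hu Metric.isOpen_ball
    (convex_ball (0 : ℂ) r).isPreconnected
    (fun n y _ => (hasDerivAt_pow n y).const_mul (c n : ℂ))
    hbound (Metric.mem_ball_self hr0)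
    (by
      apply Summable.of_norm_bounded hcs
      intro n
      rw [norm_mul, Complex.norm_real, Real.norm_eq_abs, _root_.abs_of_nonneg (hc n)]
      have : ‖(0 : ℂ) ^ n‖ ≤ 1 := by cases n <;> simp
      calc c n * ‖(0 : ℂ) ^ n‖ ≤ c n * 1 := mul_le_mul_of_nonneg_left this (hc n)
        _ = c n := mul_one _)
    (by simpa [mem_ball_zero_iff] using hwr)
  have hsum : Summable (fun n : ℕ => (c n : ℂ) * ((n : ℂ) * w ^ (n - 1))) := by
    apply Summable.of_norm_bounded hu
    intro n
    exact hbound n w (by simpa [mem_ball_zero_iff] using hwr)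
  refine hder.congr_deriv ?_
  symm
  rw [Summable.tsum_eq_zero_add hsum]
  norm_num
  exact tsum_congr fun n => by ring

/-- If `g(z) = Σ cₙ zⁿ` has nonnegative summable coefficients and
`sup_k (k+1) Σₙ (n+1)c_{n+1}/(n+k+1) ≤ M`, then `T_g` maps `HL₁` into `H^∞` with
`‖T_g f‖_{H^∞} ≤ ‖f‖_{HL₁} · M`. -/
theorem Tg_HL1_to_Hinfty (c : ℕ → ℝ) (hc : ∀ n, 0 ≤ c n) (hcs : Summable c)
    (M : ℝ)
    (hM : ∀ k : ℕ, ((k : ℝ) + 1) *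
      (∑' n : ℕ, ((n : ℝ) + 1) * c (n + 1) / ((n : ℝ) + (k : ℝ) + 1)) ≤ M)
    (a : ℕ → ℂ) (ha : Summable (fun n : ℕ => ‖a n‖ / ((n : ℝ) + 1))) :
    ∀ z : ℂ, ‖z‖ < 1 →
      ‖∫ t in (0:ℝ)..1,
          (∑' n : ℕ, a n * ((t : ℂ) * z) ^ n) *
            deriv (fun w : ℂ => ∑' n : ℕ, (c n : ℂ) * w ^ n) ((t : ℂ) * z) * z‖ ≤
        (∑' n : ℕ, ‖a n‖ / ((n : ℝ) + 1)) * M := by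
  intro z hz
  have hz1 : ‖z‖ ≤ 1 := hz.le
  set S : ℝ := ∑' n : ℕ, ‖a n‖ / ((n : ℝ) + 1) with hSdef
  have hSnn : 0 ≤ S := tsum_nonneg (fun n => by positivity)
  have haS : ∀ n : ℕ, ‖a n‖ ≤ S * ((n : ℝ) + 1) := by
    intro n
    have h := Summable.le_tsum ha n (fun j _ => by positivity)
    rwa [div_le_iff₀ (by positivity)] at h
  set Cc : ℝ := ∑' m, c m with hCcdef
  have hCc : ∀ n, c n ≤ Cc := fun n => Summable.le_tsum hcs n (fun j _ => hc j)
  have hCc0 : 0 ≤ Cc := le_trans (hc 0) (hCc 0)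
  -- summability of the two factor series in norm
  have hsumA : ∀ w : ℂ, ‖w‖ < 1 → Summable (fun k : ℕ => ‖a k * w ^ k‖) := by
    intro w hw
    apply Summable.of_nonneg_of_le (fun _ => norm_nonneg _) (fun k => ?_)
      ((summable_geom_aux (norm_nonneg w) hw).mul_left S)
    rw [norm_mul, norm_pow]
    calc ‖a k‖ * ‖w‖ ^ k ≤ S * ((k : ℝ) + 1) * ‖w‖ ^ k :=
          mul_le_mul_of_nonneg_right (haS k) (by positivity)
      _ = S * (((k : ℝ) + 1) * ‖w‖ ^ k) := by ring
  have hsumB : ∀ w : ℂ, ‖w‖ < 1 →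
      Summable (fun n : ℕ => ‖((n : ℂ) + 1) * (c (n + 1) : ℂ) * w ^ n‖) := by
    intro w hw
    apply Summable.of_nonneg_of_le (fun _ => norm_nonneg _) (fun n => ?_)
      ((summable_geom_aux (norm_nonneg w) hw).mul_left Cc)
    have he : ((n : ℂ) + 1) * (c (n + 1) : ℂ) * w ^ n
        = (((((n : ℝ) + 1) * c (n + 1)) : ℝ) : ℂ) * w ^ n := by push_cast; ring
    rw [he, norm_mul, norm_pow, Complex.norm_real, Real.norm_eq_abs,
      _root_.abs_of_nonneg (mul_nonneg (by positivity) (hc _))]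
    calc ((n : ℝ) + 1) * c (n + 1) * ‖w‖ ^ n
        ≤ ((n : ℝ) + 1) * Cc * ‖w‖ ^ n := by
          apply mul_le_mul_of_nonneg_right _ (by positivity)
          exact mul_le_mul_of_nonneg_left (hCc _) (by positivity)
      _ = Cc * (((n : ℝ) + 1) * ‖w‖ ^ n) := by ring
  -- summability of D_k and its bound
  have hDsumm : ∀ k : ℕ,
      Summable (fun n : ℕ => ((n : ℝ) + 1) * c (n + 1) / ((n : ℝ) + (k : ℝ) + 1)) := by
    intro k
    apply Summable.of_nonneg_of_le
      (fun n => div_nonneg (mul_nonneg (by positivity) (hc _)) (by positivity)) (fun n => ?_)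
      ((summable_nat_add_iff 1).mpr hcs)
    have hd : (0 : ℝ) < (n : ℝ) + (k : ℝ) + 1 := by positivity
    rw [div_le_iff₀ hd]
    have h1 : ((n : ℝ) + 1) ≤ (n : ℝ) + (k : ℝ) + 1 := by
      have := Nat.cast_nonneg (α := ℝ) k; linarith
    calc ((n : ℝ) + 1) * c (n + 1) ≤ ((n : ℝ) + (k : ℝ) + 1) * c (n + 1) :=
          mul_le_mul_of_nonneg_right h1 (hc _)
      _ = c (n + 1) * ((n : ℝ) + (k : ℝ) + 1) := mul_comm _ _
  have hDle : ∀ k : ℕ,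
      (∑' n : ℕ, ((n : ℝ) + 1) * c (n + 1) / ((n : ℝ) + (k : ℝ) + 1)) ≤ M / ((k : ℝ) + 1) := by
    intro k
    rw [le_div_iff₀ (by positivity)]
    calc (∑' n : ℕ, ((n : ℝ) + 1) * c (n + 1) / ((n : ℝ) + (k : ℝ) + 1)) * ((k : ℝ) + 1)
        = ((k : ℝ) + 1) * (∑' n : ℕ, ((n : ℝ) + 1) * c (n + 1) / ((n : ℝ) + (k : ℝ) + 1)) :=
          mul_comm _ _
      _ ≤ M := hM k
  -- the dominating double sum G
  set G : ℕ × ℕ → ℝ := fun p =>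
    ‖a p.1‖ * (((p.2 : ℝ) + 1) * c (p.2 + 1) / ((p.2 : ℝ) + (p.1 : ℝ) + 1)) with hGdef
  have hGnn : ∀ p, 0 ≤ G p := by
    intro p
    simp only [hGdef]
    exact mul_nonneg (norm_nonneg _) (div_nonneg (mul_nonneg (by positivity) (hc _))
      (by positivity))
  have hGsum : Summable G := by
    rw [summable_prod_of_nonneg hGnn]
    constructor
    · intro k
      simp only [hGdef]
      exact ((hDsumm k).mul_left _)
    · apply Summable.of_nonneg_of_le (fun k => tsum_nonneg (fun n => hGnn (k, n)))
        (fun k => ?_) (ha.mul_right M)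
      simp only [hGdef]
      rw [tsum_mul_left]
      calc ‖a k‖ * ∑' n : ℕ, ((n : ℝ) + 1) * c (n + 1) / ((n : ℝ) + (k : ℝ) + 1)
          ≤ ‖a k‖ * (M / ((k : ℝ) + 1)) :=
            mul_le_mul_of_nonneg_left (hDle k) (norm_nonneg _)
        _ = ‖a k‖ / ((k : ℝ) + 1) * M := by ring
  have hGtsum : ∑' p, G p ≤ S * M := by
    rw [Summable.tsum_prod' hGsum ((summable_prod_of_nonneg hGnn).mp hGsum).1]
    have hout : Summable (fun k => ∑' n, G (k, n)) :=
      ((summable_prod_of_nonneg hGnn).mp hGsum).2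
    calc (∑' k, ∑' n, G (k, n)) ≤ ∑' k : ℕ, ‖a k‖ / ((k : ℝ) + 1) * M := by
          apply Summable.tsum_le_tsum _ hout (ha.mul_right M)
          intro k
          simp only [hGdef]
          rw [tsum_mul_left]
          calc ‖a k‖ * ∑' n : ℕ, ((n : ℝ) + 1) * c (n + 1) / ((n : ℝ) + (k : ℝ) + 1)
              ≤ ‖a k‖ * (M / ((k : ℝ) + 1)) :=
                mul_le_mul_of_nonneg_left (hDle k) (norm_nonneg _)
            _ = ‖a k‖ / ((k : ℝ) + 1) * M := by ring
      _ = S * M := by rw [tsum_mul_right]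
  -- the per-pair functions
  set F : ℕ × ℕ → ℝ → ℂ := fun p t =>
    a p.1 * ((p.2 : ℂ) + 1) * (c (p.2 + 1) : ℂ) * ((t : ℂ) * z) ^ (p.1 + p.2) * z with hFdef
  have hFcont : ∀ p, Continuous (F p) := by
    intro p
    simp only [hFdef]
    apply Continuous.mul _ continuous_const
    exact continuous_const.mul ((Complex.continuous_ofReal.mul continuous_const).pow _)
  have hFint : ∀ p, IntegrableOn (F p) (Set.Ioc (0:ℝ) 1) := fun p =>
    (hFcont p).integrableOn_Ioc
  have hKnorm : ∀ p : ℕ × ℕ,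
      ‖a p.1 * ((p.2 : ℂ) + 1) * (c (p.2 + 1) : ℂ)‖
        = ‖a p.1‖ * (((p.2 : ℝ) + 1) * c (p.2 + 1)) := by
    intro p
    rw [norm_mul, norm_mul]
    have h1 : ‖((p.2 : ℂ) + 1)‖ = (p.2 : ℝ) + 1 := by
      rw [show ((p.2 : ℂ) + 1) = (((p.2 + 1 : ℕ) : ℕ) : ℂ) by push_cast; ring,
        Complex.norm_natCast]
      push_cast; ring
    rw [h1, Complex.norm_real, Real.norm_eq_abs, _root_.abs_of_nonneg (hc _)]
    ring
  have hFnormint : ∀ p, (∫ t in Set.Ioc (0:ℝ) 1, ‖F p t‖) ≤ G p := by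
    intro p
    have hmono : ∀ t ∈ Set.Ioc (0:ℝ) 1, ‖F p t‖
        ≤ ‖a p.1‖ * (((p.2 : ℝ) + 1) * c (p.2 + 1)) * t ^ (p.1 + p.2) := by
      intro t ht
      have hbz : ‖(t : ℂ) * z‖ ≤ t := by
        rw [norm_mul, Complex.norm_real, Real.norm_eq_abs, _root_.abs_of_nonneg ht.1.le]
        calc t * ‖z‖ ≤ t * 1 := mul_le_mul_of_nonneg_left hz1 ht.1.le
          _ = t := mul_one t
      have h3 : ‖((t : ℂ) * z) ^ (p.1 + p.2)‖ ≤ t ^ (p.1 + p.2) := by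
        rw [norm_pow]
        exact pow_le_pow_left₀ (norm_nonneg _) hbz _
      have hKnn : 0 ≤ ‖a p.1‖ * (((p.2 : ℝ) + 1) * c (p.2 + 1)) :=
        mul_nonneg (norm_nonneg _) (mul_nonneg (by positivity) (hc _))
      calc ‖F p t‖ = ‖a p.1 * ((p.2 : ℂ) + 1) * (c (p.2 + 1) : ℂ)‖
            * ‖((t : ℂ) * z) ^ (p.1 + p.2)‖ * ‖z‖ := by
            simp only [hFdef]; rw [norm_mul, norm_mul]
        _ ≤ ‖a p.1‖ * (((p.2 : ℝ) + 1) * c (p.2 + 1)) * t ^ (p.1 + p.2) * 1 := by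
            rw [hKnorm p]
            apply mul_le_mul _ hz1 (norm_nonneg _) (mul_nonneg hKnn (pow_nonneg ht.1.le _))
            exact mul_le_mul_of_nonneg_left h3 hKnn
        _ = ‖a p.1‖ * (((p.2 : ℝ) + 1) * c (p.2 + 1)) * t ^ (p.1 + p.2) := mul_one _
    have hint2 : IntegrableOn
        (fun t : ℝ => ‖a p.1‖ * (((p.2 : ℝ) + 1) * c (p.2 + 1)) * t ^ (p.1 + p.2))
        (Set.Ioc (0:ℝ) 1) := Continuous.integrableOn_Ioc (by continuity)
    calc (∫ t in Set.Ioc (0:ℝ) 1, ‖F p t‖)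
        ≤ ∫ t in Set.Ioc (0:ℝ) 1,
            ‖a p.1‖ * (((p.2 : ℝ) + 1) * c (p.2 + 1)) * t ^ (p.1 + p.2) :=
          setIntegral_mono_on ((hFint p).norm) hint2 measurableSet_Ioc hmono
      _ = ‖a p.1‖ * (((p.2 : ℝ) + 1) * c (p.2 + 1))
            * ∫ t in Set.Ioc (0:ℝ) 1, t ^ (p.1 + p.2) := by
          rw [integral_const_mul]
      _ = G p := by
          rw [← intervalIntegral.integral_of_le (zero_le_one), integral_pow]
          simp only [hGdef]
          rw [one_pow, zero_pow (by omega), sub_zero]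
          have hcast : ((p.1 + p.2 : ℕ) : ℝ) + 1 = (p.2 : ℝ) + (p.1 : ℝ) + 1 := by
            push_cast; ring
          rw [hcast]
          ring
  have hFintsum : Summable (fun p => ∫ t in Set.Ioc (0:ℝ) 1, ‖F p t‖) :=
    Summable.of_nonneg_of_le (fun p => integral_nonneg (fun t => norm_nonneg _))
      hFnormint hGsum
  -- rewrite the integral as a double sum of integrals
  have key : (∫ t in (0:ℝ)..1,
      (∑' n : ℕ, a n * ((t : ℂ) * z) ^ n) *
        deriv (fun w : ℂ => ∑' n : ℕ, (c n : ℂ) * w ^ n) ((t : ℂ) * z) * z)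
      = ∑' p, ∫ t in Set.Ioc (0:ℝ) 1, F p t := by
    rw [intervalIntegral.integral_of_le (zero_le_one)]
    rw [integral_tsum_of_summable_integral_norm hFint hFintsum]
    apply setIntegral_congr_fun measurableSet_Ioc
    intro t ht
    dsimp only
    have hwt : ‖(t : ℂ) * z‖ < 1 := by
      rw [norm_mul, Complex.norm_real, Real.norm_eq_abs, _root_.abs_of_nonneg ht.1.le]
      calc t * ‖z‖ ≤ 1 * ‖z‖ := mul_le_mul_of_nonneg_right ht.2 (norm_nonneg _)
        _ = ‖z‖ := one_mul _
        _ < 1 := hz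
    rw [(hasDerivAt_cseries c hc hcs hwt).deriv]
    rw [tsum_mul_tsum_of_summable_norm (hsumA _ hwt) (hsumB _ hwt), ← tsum_mul_right]
    apply tsum_congr
    intro p
    simp only [hFdef]
    rw [pow_add]
    ring
  rw [key]
  have hInorm : ∀ p, ‖∫ t in Set.Ioc (0:ℝ) 1, F p t‖ ≤ G p := fun p =>
    (norm_integral_le_integral_norm _).trans (hFnormint p)
  have hIsum : Summable (fun p => ‖∫ t in Set.Ioc (0:ℝ) 1, F p t‖) :=
    Summable.of_nonneg_of_le (fun p => norm_nonneg _) hInorm hGsum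
  calc ‖∑' p, ∫ t in Set.Ioc (0:ℝ) 1, F p t‖
      ≤ ∑' p, ‖∫ t in Set.Ioc (0:ℝ) 1, F p t‖ := norm_tsum_le_tsum_norm hIsum
    _ ≤ ∑' p, G p := Summable.tsum_le_tsum hInorm hIsum hGsum
    _ ≤ S * M := hGtsum
end
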